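/- arXiv:2412.00024 — 6 statements merged into one kernel-verified Lean document; each statement's English description precedes it below -/
import Mathlib

section
/- For every nonnegative integer k, the integral from 0 to 1 of x^k (1-x)^{2k} ln(x) dx equals (H_k - H_{3k+1}) / ((3k+1) * binomial(3k, k)). -/
open Real intervalIntegral MeasureTheory Set Filter

lemma intInt_pow_log (m : ℕ) :
    IntervalIntegrable (fun x : ℝ => x ^ m * Real.log x) volume 0 1 := by
  have hint : IntervalIntegrable (fun x : ℝ => 2 * x ^ (-(2:ℝ)⁻¹)) volume 0 1 :=
    (intervalIntegrable_rpow' (by norm_num)).const_mul 2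
  refine hint.mono_fun ?_ ?_
  · exact ((measurable_id.pow_const m).mul Real.measurable_log).aestronglyMeasurable
  · filter_upwards [ae_restrict_mem measurableSet_uIoc] with x hx
    rw [uIoc_of_le (by norm_num : (0:ℝ) ≤ 1)] at hx
    obtain ⟨hx0, hx1⟩ := hx
    have hxm : x ^ m ≤ 1 := pow_le_one₀ hx0.le hx1
    have hlog : |Real.log x| ≤ 2 * x ^ (-(2:ℝ)⁻¹) := by
      have h1 : Real.log x ≤ 0 := Real.log_nonpos hx0.le hx1
      have h2 : Real.log (x ^ (-(2:ℝ)⁻¹)) ≤ x ^ (-(2:ℝ)⁻¹) - 1 :=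
        Real.log_le_sub_one_of_pos (Real.rpow_pos_of_pos hx0 _)
      rw [Real.log_rpow hx0] at h2
      rw [abs_of_nonpos h1]
      nlinarith [Real.rpow_nonneg hx0.le (-(2:ℝ)⁻¹)]
    calc ‖x ^ m * Real.log x‖ = x ^ m * |Real.log x| := by
          rw [norm_mul, Real.norm_eq_abs, Real.norm_eq_abs,
            abs_of_nonneg (pow_nonneg hx0.le m)]
      _ ≤ 1 * (2 * x ^ (-(2:ℝ)⁻¹)) := by
          apply mul_le_mul hxm hlog (abs_nonneg _)
          norm_num
      _ = ‖2 * x ^ (-(2:ℝ)⁻¹)‖ := by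
          rw [one_mul, norm_mul, Real.norm_eq_abs, Real.norm_eq_abs,
            abs_of_nonneg (Real.rpow_nonneg hx0.le _)]
          norm_num

lemma integral_pow_log (m : ℕ) :
    ∫ x in (0:ℝ)..1, x ^ m * Real.log x = -1 / ((m:ℝ) + 1) ^ 2 := by
  have hm : ((m:ℝ) + 1) ≠ 0 := by positivity
  set F : ℝ → ℝ := fun x => x ^ (m + 1) * Real.log x / ((m:ℝ) + 1)
    - x ^ (m + 1) / ((m:ℝ) + 1) ^ 2 with hF
  have hcont : Continuous F := by
    have hc1 : Continuous (fun x : ℝ => x ^ (m + 1) * Real.log x) := by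
      have he : (fun x : ℝ => x ^ (m + 1) * Real.log x)
          = fun x => x ^ m * (x * Real.log x) := by funext x; ring
      rw [he]
      exact (continuous_pow m).mul continuous_mul_log
    exact (hc1.div_const _).sub ((continuous_pow (m + 1)).div_const _)
  have hderiv : ∀ x ∈ Ioo (0:ℝ) 1, HasDerivAt F (x ^ m * Real.log x) x := by
    intro x hx
    have hx0 : x ≠ 0 := hx.1.ne'
    have h1 : HasDerivAt (fun y : ℝ => y ^ (m + 1) * Real.log y)
        (((m:ℝ) + 1) * x ^ m * Real.log x + x ^ m) x := by
      have := (hasDerivAt_pow (m + 1) x).mul (Real.hasDerivAt_log hx0)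
      refine this.congr_deriv ?_
      have hxx : x ^ (m + 1) * x⁻¹ = x ^ m := by
        rw [pow_succ]; field_simp
      simp only [Nat.add_sub_cancel]
      rw [hxx]
      push_cast
      ring
    have h2 := (h1.div_const ((m:ℝ) + 1)).sub
      ((hasDerivAt_pow (m + 1) x).div_const (((m:ℝ) + 1) ^ 2))
    refine h2.congr_deriv ?_
    simp only [Nat.add_sub_cancel]
    push_cast
    field_simp
    ring
  have ha : Tendsto F (nhdsWithin (0:ℝ) (Ioi 0)) (nhds 0) := by
    have h0 : F 0 = 0 := by
      simp [hF, Real.log_zero, zero_pow (Nat.succ_ne_zero m)]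
    have ht := (hcont.tendsto 0).mono_left (nhdsWithin_le_nhds (s := Ioi (0:ℝ)))
    rwa [h0] at ht
  have hb : Tendsto F (nhdsWithin (1:ℝ) (Iio 1)) (nhds (F 1)) :=
    (hcont.tendsto 1).mono_left nhdsWithin_le_nhds
  have key := integral_eq_sub_of_hasDerivAt_of_tendsto (by norm_num : (0:ℝ) < 1)
    hderiv (intInt_pow_log m) ha hb
  rw [key]
  simp only [hF, one_pow, Real.log_one, mul_zero, zero_div, zero_sub, sub_zero]
  ring

lemma intInt_main (a b : ℕ) :
    IntervalIntegrable (fun x : ℝ => x ^ a * (1 - x) ^ b * Real.log x) volume 0 1 := by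
  have h : (fun x : ℝ => x ^ a * (1 - x) ^ b * Real.log x)
      = fun x => (x ^ a * Real.log x) * (1 - x) ^ b := by funext x; ring
  rw [h]
  exact (intInt_pow_log a).mul_continuousOn
    (((continuous_const.sub continuous_id).pow b).continuousOn)

lemma alg_step (A B H G c1 c2 c3 : ℝ) (hA : A + 1 ≠ 0) (hB : B + 1 ≠ 0)
    (hAB1 : A + B + 1 ≠ 0) (hAB2 : A + B + 2 ≠ 0) (hc2 : c2 ≠ 0)
    (e1 : (A + B + 1) * c1 = c2 * (A + 1)) (e2 : c2 * (A + 1) = c3 * (B + 1)) :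
    (H - G) / ((A + B + 1) * c1)
      - ((H + (A + 1)⁻¹) - (G + (A + B + 2)⁻¹)) / ((A + B + 2) * c2)
    = (H - (G + (A + B + 2)⁻¹)) / ((A + B + 2) * c3) := by
  have hc1 : c1 = c2 * (A + 1) / (A + B + 1) := by
    field_simp
    linarith
  have hc3 : c3 = c2 * (A + 1) / (B + 1) := by
    field_simp
    linarith
  rw [hc1, hc3]
  field_simp
  ring

set_option maxHeartbeats 1000000 in
lemma main_lemma (b a : ℕ) :
    ∫ x in (0:ℝ)..1, x ^ a * (1 - x) ^ b * Real.log x =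
      ((harmonic a : ℝ) - (harmonic (a + b + 1) : ℝ)) /
        (((a:ℝ) + b + 1) * (Nat.choose (a + b) a : ℝ)) := by
  induction b generalizing a with
  | zero =>
    have h : (fun x : ℝ => x ^ a * (1 - x) ^ 0 * Real.log x)
        = fun x => x ^ a * Real.log x := by funext x; ring
    rw [show ∫ x in (0:ℝ)..1, x ^ a * (1 - x) ^ 0 * Real.log x
        = ∫ x in (0:ℝ)..1, x ^ a * Real.log x from by rw [h]]
    rw [integral_pow_log a]
    simp only [Nat.add_zero, Nat.choose_self, harmonic_succ]
    push_cast
    have : ((a:ℝ) + 1) ≠ 0 := by positivity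
    field_simp
    ring
  | succ b ih =>
    have hsplit : (fun x : ℝ => x ^ a * (1 - x) ^ (b + 1) * Real.log x)
        = fun x => x ^ a * (1 - x) ^ b * Real.log x
          - x ^ (a + 1) * (1 - x) ^ b * Real.log x := by funext x; ring
    rw [show ∫ x in (0:ℝ)..1, x ^ a * (1 - x) ^ (b + 1) * Real.log x
        = ∫ x in (0:ℝ)..1, (x ^ a * (1 - x) ^ b * Real.log x
          - x ^ (a + 1) * (1 - x) ^ b * Real.log x) from by rw [hsplit]]
    rw [intervalIntegral.integral_sub (intInt_main a b) (intInt_main (a + 1) b)]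
    rw [ih a, ih (a + 1)]
    -- now pure algebra
    have e1 : ((a:ℝ) + b + 1) * (Nat.choose (a + b) a : ℝ)
        = (Nat.choose (a + b + 1) (a + 1) : ℝ) * ((a:ℝ) + 1) := by
      have := Nat.add_one_mul_choose_eq (a + b) a
      have h2 : ((a + b + 1) * Nat.choose (a + b) a : ℕ)
          = (Nat.choose (a + b + 1) (a + 1) * (a + 1) : ℕ) := by
        simpa [Nat.succ_eq_add_one] using this
      exact_mod_cast h2
    have e2 : (Nat.choose (a + b + 1) (a + 1) : ℝ) * ((a:ℝ) + 1)
        = (Nat.choose (a + b + 1) a : ℝ) * ((b:ℝ) + 1) := by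
      have := Nat.choose_succ_right_eq (a + b + 1) a
      have h2 : (Nat.choose (a + b + 1) (a + 1) * (a + 1) : ℕ)
          = (Nat.choose (a + b + 1) a * (b + 1) : ℕ) := by
        rw [this]; congr 1; omega
      exact_mod_cast h2
    have hc2pos : (0:ℝ) < (Nat.choose (a + b + 1) (a + 1) : ℝ) := by
      exact_mod_cast Nat.choose_pos (by omega)
    have ha1 : ((a:ℝ) + 1) ≠ 0 := by positivity
    have hb1 : ((b:ℝ) + 1) ≠ 0 := by positivity
    have hab1 : ((a:ℝ) + b + 1) ≠ 0 := by positivity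
    have hab2 : ((a:ℝ) + b + 2) ≠ 0 := by positivity
    rw [show a + (b + 1) + 1 = a + b + 1 + 1 from by omega,
      show a + (b + 1) = a + b + 1 from by omega,
      show a + 1 + b + 1 = a + b + 1 + 1 from by omega,
      show a + 1 + b = a + b + 1 from by omega]
    rw [harmonic_succ (a + b + 1), harmonic_succ a]
    push_cast
    linear_combination alg_step (a : ℝ) (b : ℝ) ((harmonic a : ℚ) : ℝ)
      ((harmonic (a + b + 1) : ℚ) : ℝ) ((Nat.choose (a + b) a : ℕ) : ℝ)
      ((Nat.choose (a + b + 1) (a + 1) : ℕ) : ℝ) ((Nat.choose (a + b + 1) a : ℕ) : ℝ)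
      ha1 hb1 hab1 hab2 hc2pos.ne' e1 e2

theorem stmt_0 (k : ℕ) :
    ∫ x in (0:ℝ)..1, x ^ k * (1 - x) ^ (2 * k) * Real.log x =
      ((harmonic k : ℝ) - (harmonic (3 * k + 1) : ℝ)) /
        ((3 * k + 1) * (Nat.choose (3 * k) k : ℝ)) := by
  have h := main_lemma (2 * k) k
  rw [show k + 2 * k + 1 = 3 * k + 1 from by omega,
    show k + 2 * k = 3 * k from by omega] at h
  rw [h]
  push_cast
  ring_nf
end

section
/- For every complex number z with |z| < 1, the sum over k >= 0 of (H_{3k+1} - H_k) * z^k / ((3k+1) * binomial(3k,k)) equals -∫_0^1 ln(x) / (1 - z*x*(1-x)^2) dx. -/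
open MeasureTheory Real Set

lemma neglog_int : IntegrableOn (fun x : ℝ => -Real.log x) (Set.Ioc (0:ℝ) 1) := by
  have h := intervalIntegral.integrableOn_deriv_of_nonneg
    (g := fun x : ℝ => x - x * Real.log x) (g' := fun x : ℝ => -Real.log x)
    (a := 0) (b := 1)
    ((continuous_id.sub Real.continuous_mul_log).continuousOn)
    (fun x hx => ?_) (fun x hx => ?_)
  · exact h
  · have h1 : HasDerivAt (fun y : ℝ => y * Real.log y) (1 * Real.log x + x * x⁻¹) x :=
      (hasDerivAt_id x).mul (Real.hasDerivAt_log hx.1.ne')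
    have h2 := (hasDerivAt_id x).sub h1
    refine h2.congr_deriv ?_
    rw [mul_inv_cancel₀ hx.1.ne']; ring
  · have := Real.log_nonpos hx.1.le hx.2.le
    simp only [neg_nonneg]; exact this

lemma int_ab (a b : ℕ) :
    IntegrableOn (fun x : ℝ => x ^ a * (1 - x) ^ b * (-Real.log x)) (Set.Ioc (0:ℝ) 1) := by
  apply Integrable.mono' neglog_int
  · exact (((measurable_id.pow_const a).mul ((measurable_const.sub measurable_id).pow_const b)).mul
      Real.measurable_log.neg).aestronglyMeasurable
  · filter_upwards [ae_restrict_mem measurableSet_Ioc] with x hx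
    have hl : 0 ≤ -Real.log x := by
      simp only [neg_nonneg]; exact Real.log_nonpos hx.1.le hx.2
    have hx1 : (0:ℝ) ≤ x ^ a := pow_nonneg hx.1.le a
    have hx2 : x ^ a ≤ 1 := pow_le_one₀ hx.1.le hx.2
    have hy1 : (0:ℝ) ≤ (1 - x) ^ b := by
      apply pow_nonneg; linarith [hx.2]
    have hy2 : (1 - x) ^ b ≤ 1 := pow_le_one₀ (by linarith [hx.2]) (by linarith [hx.1])
    rw [Real.norm_eq_abs, abs_of_nonneg (mul_nonneg (mul_nonneg hx1 hy1) hl)]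
    calc x ^ a * (1 - x) ^ b * (-Real.log x) ≤ 1 * (-Real.log x) := by
          apply mul_le_mul_of_nonneg_right _ hl
          calc x ^ a * (1-x)^b ≤ 1 * 1 := mul_le_mul hx2 hy2 hy1 zero_le_one
          _ = 1 := by ring
      _ = -Real.log x := one_mul _

lemma int_pow_neglog (a : ℕ) :
    ∫ x in (0:ℝ)..1, x ^ a * (-Real.log x) = 1 / ((a : ℝ) + 1) ^ 2 := by
  have key := intervalIntegral.integral_eq_sub_of_hasDeriv_right_of_le
    (f := fun x : ℝ => x ^ (a+1) / ((a:ℝ)+1)^2 - x ^ a * (x * Real.log x) / ((a:ℝ)+1))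
    (f' := fun x : ℝ => x ^ a * (-Real.log x)) (a := 0) (b := 1) zero_le_one
    ?_ ?_ ?_
  · rw [key]; norm_num
  · apply Continuous.continuousOn
    exact ((continuous_pow _).div_const _).sub
      (((continuous_pow a).mul Real.continuous_mul_log).div_const _)
  · intro x hx
    apply HasDerivAt.hasDerivWithinAt
    have h0 : x ≠ 0 := hx.1.ne'
    have h1 : HasDerivAt (fun y : ℝ => y ^ a * (y * Real.log y))
        ((a : ℝ) * x ^ (a-1) * (x * Real.log x) + x ^ a * (1 * Real.log x + x * x⁻¹)) x :=
      (hasDerivAt_pow a x).mul ((hasDerivAt_id x).mul (Real.hasDerivAt_log h0))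
    have h2 := ((hasDerivAt_pow (a+1) x).div_const (((a:ℝ)+1)^2)).sub (h1.div_const ((a:ℝ)+1))
    refine h2.congr_deriv ?_
    have hxa : (a:ℝ) * x ^ (a-1) * (x * Real.log x) = (a:ℝ) * x ^ a * Real.log x := by
      rcases a with _ | a
      · simp
      · rw [Nat.add_sub_cancel, pow_succ]; ring
    have hc : ((a:ℝ) + 1) ≠ 0 := by positivity
    simp only [Nat.add_sub_cancel, one_mul, Nat.cast_add, Nat.cast_one]
    rw [mul_inv_cancel₀ h0, hxa]
    field_simp
    ring
  · rw [intervalIntegrable_iff_integrableOn_Ioc_of_le zero_le_one]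
    simpa using int_ab a 0

lemma int_ab' (a b : ℕ) :
    IntervalIntegrable (fun x : ℝ => x ^ a * (1 - x) ^ b * (-Real.log x)) volume 0 1 :=
  (intervalIntegrable_iff_integrableOn_Ioc_of_le zero_le_one).mpr (int_ab a b)

lemma main_real : ∀ b a : ℕ, ∫ x in (0:ℝ)..1, x ^ a * (1 - x) ^ b * (-Real.log x)
    = ((a.factorial : ℝ) * b.factorial / (a + b + 1).factorial) *
      (((harmonic (a + b + 1) : ℚ) : ℝ) - ((harmonic a : ℚ) : ℝ)) := by
  intro b
  induction b with
  | zero =>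
    intro a
    have h1 : ∫ x in (0:ℝ)..1, x ^ a * (1 - x) ^ 0 * (-Real.log x)
        = ∫ x in (0:ℝ)..1, x ^ a * (-Real.log x) := by
      apply intervalIntegral.integral_congr
      intro x _; simp
    rw [h1, int_pow_neglog a]
    simp only [Nat.add_zero, harmonic_succ, Nat.factorial_succ]
    push_cast
    have hc : ((a:ℝ) + 1) ≠ 0 := by positivity
    have hf : (a.factorial : ℝ) ≠ 0 := by positivity
    field_simp
    ring
  | succ b ih =>
    intro a
    have h1 : ∫ x in (0:ℝ)..1, x ^ a * (1 - x) ^ (b+1) * (-Real.log x)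
        = ∫ x in (0:ℝ)..1, (x ^ a * (1 - x) ^ b * (-Real.log x)
            - x ^ (a+1) * (1 - x) ^ b * (-Real.log x)) := by
      apply intervalIntegral.integral_congr
      intro x _; ring
    rw [h1, intervalIntegral.integral_sub (int_ab' a b) (int_ab' (a+1) b), ih a, ih (a+1)]
    have e1 : a + 1 + b + 1 = a + b + 1 + 1 := by omega
    have e2 : a + 1 + b = a + b + 1 := by omega
    have e3 : a + (b + 1) + 1 = a + b + 1 + 1 := by omega
    rw [e1, e3, harmonic_succ (a+b+1), harmonic_succ a,
      Nat.factorial_succ (a+b+1), Nat.factorial_succ a, Nat.factorial_succ b]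
    push_cast
    have h2 : ((a:ℝ) + b + 1 + 1) ≠ 0 := by positivity
    have h3 : ((a:ℝ) + 1) ≠ 0 := by positivity
    have h4 : ((a + b + 1).factorial : ℝ) ≠ 0 := by positivity
    have h5 : (a.factorial : ℝ) ≠ 0 := by positivity
    have h6 : (b.factorial : ℝ) ≠ 0 := by positivity
    field_simp
    ring

open Complex in
theorem stmt_1 (z : ℂ) (hz : ‖z‖ < 1) :
    ∑' k : ℕ, ((harmonic (3 * k + 1) : ℂ) - (harmonic k : ℂ)) * z ^ k /
        ((3 * k + 1) * (Nat.choose (3 * k) k : ℂ)) =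
      -∫ x in (0:ℝ)..1, (Real.log x : ℂ) / (1 - z * (x : ℂ) * (1 - (x : ℂ)) ^ 2) := by
  have hzn : ‖z‖ < 1 := by exact hz
  set G : ℕ → ℝ → ℂ := fun k x => (z * (x:ℂ) * (1 - (x:ℂ))^2)^k * ((-Real.log x : ℝ) : ℂ)
    with hG
  have hwle : ∀ x ∈ Set.Ioc (0:ℝ) 1, ‖z * (x:ℂ) * (1 - (x:ℂ))^2‖ ≤ ‖z‖ := by
    intro x hx
    rw [norm_mul, norm_mul, norm_pow]
    have e1 : ‖(x:ℂ)‖ = x := by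
      rw [Complex.norm_real, Real.norm_of_nonneg hx.1.le]
    have e2 : ‖1 - (x:ℂ)‖ = 1 - x := by
      have h12 : (1 : ℂ) - (x:ℂ) = ((1 - x : ℝ) : ℂ) := by push_cast; ring
      rw [h12, Complex.norm_real, Real.norm_of_nonneg (by linarith [hx.2])]
    rw [e1, e2]
    have hb2 : x * (1-x)^2 ≤ 1 := by nlinarith [hx.1, hx.2, sq_nonneg (1-x), sq_nonneg x]
    calc ‖z‖ * x * (1-x)^2 = ‖z‖ * (x * (1-x)^2) := by ring
      _ ≤ ‖z‖ * 1 := mul_le_mul_of_nonneg_left hb2 (norm_nonneg z)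
      _ = ‖z‖ := mul_one _
  have hGbound : ∀ k : ℕ, ∀ x ∈ Set.Ioc (0:ℝ) 1, ‖G k x‖ ≤ ‖z‖^k * (-Real.log x) := by
    intro k x hx
    have hl : (0:ℝ) ≤ -Real.log x := by
      simp only [neg_nonneg]; exact Real.log_nonpos hx.1.le hx.2
    rw [hG]
    simp only [norm_mul, norm_pow, Complex.norm_real]
    rw [Real.norm_of_nonneg hl]
    apply mul_le_mul_of_nonneg_right _ hl
    have := pow_le_pow_left₀ (norm_nonneg _) (hwle x hx) k
    simp only [norm_mul, norm_pow, Complex.norm_real] at this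
    exact this
  have hGint : ∀ k : ℕ, Integrable (G k) (volume.restrict (Set.Ioc (0:ℝ) 1)) := by
    intro k
    apply Integrable.mono' (neglog_int.const_mul (‖z‖^k))
    · apply Measurable.aestronglyMeasurable
      apply Measurable.mul
      · exact (((measurable_const.mul Complex.measurable_ofReal).mul
          ((measurable_const.sub Complex.measurable_ofReal).pow_const 2)).pow_const k)
      · exact Complex.measurable_ofReal.comp Real.measurable_log.neg
    · filter_upwards [ae_restrict_mem measurableSet_Ioc] with x hx
      exact hGbound k x hx
  have hneg_one : ∫ x in Set.Ioc (0:ℝ) 1, (-Real.log x) = 1 := by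
    rw [← intervalIntegral.integral_of_le zero_le_one]
    have := int_pow_neglog 0
    simpa using this
  have hsum : Summable fun k => ∫ x in Set.Ioc (0:ℝ) 1, ‖G k x‖ := by
    apply Summable.of_nonneg_of_le (fun k => integral_nonneg (fun x => norm_nonneg _))
      (fun k => ?_) (summable_geometric_of_lt_one (norm_nonneg z) hzn)
    calc ∫ x in Set.Ioc (0:ℝ) 1, ‖G k x‖ ≤ ∫ x in Set.Ioc (0:ℝ) 1, ‖z‖^k * (-Real.log x) := by
          apply setIntegral_mono_on ((hGint k).norm) (neglog_int.const_mul _) measurableSet_Ioc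
          exact hGbound k
      _ = ‖z‖^k := by rw [integral_const_mul, hneg_one, mul_one]
  have hswap := MeasureTheory.integral_tsum_of_summable_integral_norm hGint hsum
  have hrhs : -∫ x in (0:ℝ)..1, (Real.log x : ℂ) / (1 - z * (x:ℂ) * (1 - (x:ℂ))^2)
      = ∫ x in Set.Ioc (0:ℝ) 1, ∑' k, G k x := by
    rw [intervalIntegral.integral_of_le zero_le_one, ← integral_neg]
    apply setIntegral_congr_fun measurableSet_Ioc
    intro x hx
    have hw : ‖z * (x:ℂ) * (1 - (x:ℂ))^2‖ < 1 := lt_of_le_of_lt (hwle x hx) hzn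
    rw [hG]
    simp only
    rw [tsum_mul_right, tsum_geometric_of_norm_lt_one hw, Complex.ofReal_neg,
      div_eq_mul_inv]
    ring
  rw [hrhs, ← hswap]
  apply tsum_congr
  intro k
  have hGk : ∀ x : ℝ, G k x = z^k * (((x^k * (1-x)^(2*k) * (-Real.log x)) : ℝ) : ℂ) := by
    intro x
    rw [hG]
    simp only
    push_cast
    rw [mul_pow, mul_pow, pow_mul]
    ring
  simp_rw [hGk]
  rw [MeasureTheory.integral_const_mul]
  have hcoe : ∫ x in Set.Ioc (0:ℝ) 1, (((x^k * (1-x)^(2*k) * (-Real.log x)) : ℝ) : ℂ)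
      = ((∫ x in Set.Ioc (0:ℝ) 1, x^k * (1-x)^(2*k) * (-Real.log x) : ℝ) : ℂ) :=
    integral_ofReal
  rw [hcoe, ← intervalIntegral.integral_of_le zero_le_one, main_real (2*k) k]
  have e1 : k + 2*k + 1 = 3*k + 1 := by ring
  rw [e1]
  -- final algebra
  have hfacnat : (3*k).choose k * (k.factorial * (2*k).factorial) = (3*k).factorial := by
    have h := Nat.choose_mul_factorial_mul_factorial
      (show k ≤ 3*k by omega)
    have e2 : 3*k - k = 2*k := by omega
    rw [e2] at h
    rw [← h]; ring
  have hfac : ((3*k+1).factorial : ℂ) = (3*(k:ℂ)+1) * ((3*k).choose k) * (k.factorial * (2*k).factorial) := by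
    rw [Nat.factorial_succ, ← hfacnat]
    push_cast
    ring
  have hne1 : ((k.factorial : ℂ)) ≠ 0 := by
    simp [Nat.cast_ne_zero, Nat.factorial_ne_zero]
  have hne2 : (((2*k).factorial : ℂ)) ≠ 0 := by
    simp [Nat.cast_ne_zero, Nat.factorial_ne_zero]
  have hne3 : (3*(k:ℂ)+1) ≠ 0 := by
    have : ((3*k+1 : ℕ) : ℂ) ≠ 0 := Nat.cast_ne_zero.mpr (by omega)
    push_cast at this
    convert this using 1
  have hne4 : (((3*k).choose k : ℂ)) ≠ 0 := by
    simp only [Nat.cast_ne_zero]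
    exact (Nat.choose_pos (show k ≤ 3*k by omega)).ne'
  push_cast
  rw [hfac]
  field_simp
end

section
/- For every real λ with λ not in the interval [0,1], the integral from 0 to 1 of ln(x/(1-x))/(x - λ) dx equals -(1/2) * (ln((λ-1)/λ))^2. -/
open MeasureTheory Set Real

lemma stmt3_loginteg : IntervalIntegrable Real.log volume 0 1 := by
  have hb : IntervalIntegrable (fun x : ℝ => 2 * x ^ (-(1/2) : ℝ)) volume 0 1 :=
    (intervalIntegral.intervalIntegrable_rpow' (by norm_num)).const_mul 2
  rw [intervalIntegrable_iff_integrableOn_Ioc_of_le zero_le_one] at hb ⊢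
  refine hb.mono' Real.measurable_log.aestronglyMeasurable ?_
  rw [ae_restrict_iff' measurableSet_Ioc]
  filter_upwards with x hx
  have hx0 : 0 < x := hx.1
  have hy : 0 < x ^ (-(1/2) : ℝ) := Real.rpow_pos_of_pos hx0 _
  have hlogy : Real.log (x ^ (-(1/2) : ℝ)) = -(1/2) * Real.log x := Real.log_rpow hx0 _
  have h1 : Real.log (x ^ (-(1/2) : ℝ)) ≤ x ^ (-(1/2) : ℝ) - 1 :=
    Real.log_le_sub_one_of_pos hy
  have hlx : Real.log x ≤ 0 := Real.log_nonpos hx0.le hx.2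
  rw [Real.norm_eq_abs, abs_of_nonpos hlx]
  nlinarith

theorem stmt_3 (lam : ℝ) (hlam : lam ∉ Set.Icc (0:ℝ) 1) :
    ∫ x in (0:ℝ)..1, Real.log (x / (1 - x)) / (x - lam) =
      -(1 / 2) * (Real.log ((lam - 1) / lam)) ^ 2 := by
  set L : ℝ := Real.log ((lam - 1) / lam) with hL
  set h : ℝ → ℝ := fun x => Real.log (x / (1 - x)) / (x - lam) with hh
  set ψ : ℝ → ℝ := fun x => lam * (1 - x) / (lam - x) with hψ
  have hcase : lam < 0 ∨ 1 < lam := by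
    rcases lt_or_ge lam 0 with hc | hc
    · exact Or.inl hc
    · right; by_contra hcon; push_neg at hcon; exact hlam ⟨hc, hcon⟩
  have hprod : 0 < lam * (lam - 1) := by rcases hcase with hc | hc <;> nlinarith
  have hlam0 : lam ≠ 0 := by rcases hcase with hc | hc <;> · intro he; rw [he] at hc; norm_num at hc
  have hlam1 : lam - 1 ≠ 0 := by rcases hcase with hc | hc <;> · intro he; nlinarith
  have hsub : ∀ x ∈ Set.Icc (0:ℝ) 1, lam - x ≠ 0 := by
    intro x hx; rcases hcase with hc | hc
    · intro he; nlinarith [hx.1]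
    · intro he; nlinarith [hx.2]
  -- the derivative of ψ
  have hderiv : ∀ x ∈ Set.Ioo (0:ℝ) 1,
      HasDerivAt ψ (lam * (1 - lam) / (lam - x)^2) x := by
    intro x hx
    have hv0 : lam - x ≠ 0 := hsub x (Set.mem_Icc.2 ⟨hx.1.le, hx.2.le⟩)
    have hu : HasDerivAt (fun y : ℝ => lam * (1 - y)) (lam * (-1)) x :=
      ((hasDerivAt_id x).const_sub 1).const_mul lam
    have hv : HasDerivAt (fun y : ℝ => lam - y) (-1) x := (hasDerivAt_id x).const_sub lam
    have := hu.div hv hv0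
    refine this.congr_deriv ?_
    ring
  -- ψ maps Ioo 0 1 into itself
  have hmaps : ∀ x ∈ Set.Ioo (0:ℝ) 1, ψ x ∈ Set.Ioo (0:ℝ) 1 := by
    intro x hx
    have hv0 : lam - x ≠ 0 := hsub x (Set.mem_Icc.2 ⟨hx.1.le, hx.2.le⟩)
    have h1 : (1:ℝ) - ψ x = (lam - 1) * x / (lam - x) := by
      rw [hψ]; field_simp; ring
    constructor
    · rw [hψ, div_pos_iff]
      rcases hcase with hc | hc
      · right; constructor <;> nlinarith [hx.1, hx.2]
      · left; constructor <;> nlinarith [hx.1, hx.2]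
    · have : (0:ℝ) < 1 - ψ x := by
        rw [h1, div_pos_iff]
        rcases hcase with hc | hc
        · right; constructor <;> nlinarith [hx.1, hx.2]
        · left; constructor <;> nlinarith [hx.1, hx.2]
      linarith
  -- ψ is an involution on Ioo 0 1
  have hinvol : ∀ x ∈ Set.Ioo (0:ℝ) 1, ψ (ψ x) = x := by
    intro x hx
    have hv0 : lam - x ≠ 0 := hsub x (Set.mem_Icc.2 ⟨hx.1.le, hx.2.le⟩)
    have hps : lam - ψ x = lam * (lam - 1) / (lam - x) := by
      rw [hψ]; field_simp; ring
    have hps0 : lam - ψ x ≠ 0 := by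
      rw [hps]; exact div_ne_zero (ne_of_gt hprod) hv0
    rw [hψ]
    simp only
    rw [div_eq_iff hps0]
    rw [hψ]
    simp only
    field_simp
    ring
  have hinj : Set.InjOn ψ (Set.Ioo (0:ℝ) 1) := by
    intro x hx y hy hxy
    have := congrArg ψ hxy
    rwa [hinvol x hx, hinvol y hy] at this
  have himg : ψ '' Set.Ioo (0:ℝ) 1 = Set.Ioo (0:ℝ) 1 := by
    apply Set.Subset.antisymm
    · rintro y ⟨x, hx, rfl⟩; exact hmaps x hx
    · intro y hy; exact ⟨ψ y, hmaps y hy, hinvol y hy⟩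
  -- key pointwise identity
  have hkey : ∀ x ∈ Set.Ioo (0:ℝ) 1,
      |lam * (1 - lam) / (lam - x)^2| • h (ψ x) = -L * (x - lam)⁻¹ - h x := by
    intro x hx
    have hx0 : (0:ℝ) < x := hx.1
    have hx1 : x < 1 := hx.2
    have hv0 : lam - x ≠ 0 := hsub x (Set.mem_Icc.2 ⟨hx0.le, hx1.le⟩)
    have habs : |lam * (1 - lam) / (lam - x)^2| = lam * (lam - 1) / (lam - x)^2 := by
      rw [abs_div, abs_of_pos (by positivity : (0:ℝ) < (lam - x)^2)]
      congr 1
      rw [abs_of_neg (by nlinarith : lam * (1 - lam) < 0)]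
      ring
    have h1 : (1:ℝ) - ψ x = (lam - 1) * x / (lam - x) := by
      rw [hψ]; field_simp; ring
    have hps : ψ x - lam = -(lam * (lam - 1)) / (lam - x) := by
      rw [hψ]; field_simp; ring
    have hratio : ψ x / (1 - ψ x) = (lam / (lam - 1)) * ((1 - x) / x) := by
      rw [h1, hψ]
      field_simp
    have hlog : Real.log (ψ x / (1 - ψ x)) = -L - Real.log (x / (1 - x)) := by
      rw [hratio, Real.log_mul (div_ne_zero hlam0 hlam1)
        (div_ne_zero (by linarith) (ne_of_gt hx0))]
      have e1 : lam / (lam - 1) = ((lam - 1) / lam)⁻¹ := by rw [inv_div]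
      have e2 : (1 - x) / x = (x / (1 - x))⁻¹ := by rw [inv_div]
      rw [e1, e2, Real.log_inv, Real.log_inv, hL]
      ring
    rw [habs, smul_eq_mul, hh]
    simp only
    rw [hps, hlog]
    have hxl : x - lam ≠ 0 := fun he => hv0 (by linarith)
    have hpr0 : lam * (lam - 1) ≠ 0 := ne_of_gt hprod
    generalize Real.log (x / (1 - x)) = T
    field_simp
    ring
  -- integrability
  have hcont_inv : ContinuousOn (fun x : ℝ => (x - lam)⁻¹) (Set.uIcc (0:ℝ) 1) := by
    apply ContinuousOn.inv₀ (by fun_prop)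
    intro x hx
    rw [Set.uIcc_of_le zero_le_one] at hx
    exact fun he => hsub x hx (by linarith)
  have h2_int : IntervalIntegrable (fun x : ℝ => Real.log (1 - x)) volume 0 1 := by
    have := stmt3_loginteg.comp_sub_left 1
    norm_num at this
    exact this.symm
  have hg_int : IntervalIntegrable (fun x => (Real.log x - Real.log (1 - x)) * (x - lam)⁻¹)
      volume 0 1 :=
    IntervalIntegrable.mul_continuousOn (stmt3_loginteg.sub h2_int) hcont_inv
  have heq : Set.EqOn (fun x => (Real.log x - Real.log (1 - x)) * (x - lam)⁻¹) h
      (Set.uIcc (0:ℝ) 1) := by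
    intro x hx
    rw [Set.uIcc_of_le zero_le_one] at hx
    rw [hh]
    simp only
    rcases eq_or_lt_of_le hx.1 with h0 | h0
    · rw [← h0]; norm_num
    rcases eq_or_lt_of_le hx.2 with h1 | h1
    · rw [h1]; norm_num
    · rw [Real.log_div (ne_of_gt h0) (by intro he; linarith : (1:ℝ) - x ≠ 0)]
      rw [div_eq_mul_inv]
  have hInt : IntervalIntegrable h volume 0 1 := by
    rw [intervalIntegrable_iff_integrableOn_Ioc_of_le zero_le_one] at hg_int ⊢
    refine hg_int.congr_fun (fun x hx => heq ?_) measurableSet_Ioc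
    rw [Set.uIcc_of_le zero_le_one]
    exact ⟨hx.1.le, hx.2⟩
  have hIoo_int : IntegrableOn h (Set.Ioo (0:ℝ) 1) volume :=
    ((intervalIntegrable_iff_integrableOn_Ioc_of_le zero_le_one).1 hInt).mono_set
      Set.Ioo_subset_Ioc_self
  have hinv_int : IntervalIntegrable (fun x : ℝ => (x - lam)⁻¹) volume 0 1 :=
    ContinuousOn.intervalIntegrable hcont_inv
  have hinv_Ioo : IntegrableOn (fun x : ℝ => (x - lam)⁻¹) (Set.Ioo (0:ℝ) 1) volume :=
    ((intervalIntegrable_iff_integrableOn_Ioc_of_le zero_le_one).1 hinv_int).mono_set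
      Set.Ioo_subset_Ioc_self
  -- the elementary integral
  have hJ : ∫ x in (0:ℝ)..1, (x - lam)⁻¹ = L := by
    have hc : ∫ x in (0:ℝ)..1, (x - lam)⁻¹ = ∫ x in (0 - lam)..(1 - lam), x⁻¹ :=
      intervalIntegral.integral_comp_sub_right (fun x => x⁻¹) lam
    have hne : (0:ℝ) ∉ Set.uIcc (0 - lam) (1 - lam) := by
      rcases hcase with hcc | hcc
      · exact Set.notMem_uIcc_of_lt (by linarith) (by linarith)
      · exact Set.notMem_uIcc_of_gt (by linarith) (by linarith)
    rw [hc, integral_inv hne, hL, zero_sub, div_neg, ← neg_div, neg_sub]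
  have hJIoo : ∫ x in Set.Ioo (0:ℝ) 1, (x - lam)⁻¹ = L := by
    rw [← integral_Ioc_eq_integral_Ioo, ← intervalIntegral.integral_of_le zero_le_one]
    exact hJ
  -- assemble
  have hIoo : ∫ x in (0:ℝ)..1, h x = ∫ x in Set.Ioo (0:ℝ) 1, h x := by
    rw [intervalIntegral.integral_of_le zero_le_one, integral_Ioc_eq_integral_Ioo]
  have hsubst : ∫ x in Set.Ioo (0:ℝ) 1, h x
      = ∫ x in Set.Ioo (0:ℝ) 1, |lam * (1 - lam) / (lam - x)^2| • h (ψ x) := by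
    conv_lhs => rw [← himg]
    exact integral_image_eq_integral_abs_deriv_smul measurableSet_Ioo
      (fun x hx => (hderiv x hx).hasDerivWithinAt) hinj h
  have hsplit : ∫ x in Set.Ioo (0:ℝ) 1, |lam * (1 - lam) / (lam - x)^2| • h (ψ x)
      = -L * (∫ x in Set.Ioo (0:ℝ) 1, (x - lam)⁻¹) - ∫ x in Set.Ioo (0:ℝ) 1, h x := by
    rw [setIntegral_congr_fun measurableSet_Ioo hkey,
      integral_sub (hinv_Ioo.const_mul (-L)) hIoo_int,
      integral_const_mul]
  have hfinal : ∫ x in Set.Ioo (0:ℝ) 1, h x = -(1/2) * L^2 := by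
    have h2 : ∫ x in Set.Ioo (0:ℝ) 1, h x
        = -L * L - ∫ x in Set.Ioo (0:ℝ) 1, h x := by
      conv_lhs => rw [hsubst, hsplit, hJIoo]
    have hsq : L^2 = L * L := sq L
    linarith
  show ∫ x in (0:ℝ)..1, h x = -(1/2) * L^2
  rw [hIoo, hfinal]
end

section
/- The integral from 0 to 1 of ln(x) / ((x-2)(x²+1)) dx equals π²/48 - (ln 2)²/10 + (2/5)·G, where G is Catalan's constant. -/
open Real MeasureTheory Set

namespace Aux


lemma neg_log_le {x : ℝ} (hx : 0 < x) : -Real.log x ≤ 2 * x ^ (-(1/2) : ℝ) := by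
  have h1 : Real.log (x ^ (-(1/2) : ℝ)) ≤ x ^ (-(1/2):ℝ) - 1 :=
    Real.log_le_sub_one_of_pos (Real.rpow_pos_of_pos hx _)
  rw [Real.log_rpow hx] at h1
  have h2 : (0:ℝ) < x ^ (-(1/2):ℝ) := Real.rpow_pos_of_pos hx _
  linarith

lemma integrableOn_bound {a : ℝ} (ha : 0 < a) :
    IntegrableOn (fun x : ℝ => 2 * x ^ (-(1/2) : ℝ)) (Ioc 0 a) := by
  have h := intervalIntegral.intervalIntegrable_rpow' (a := 0) (b := a)
    (r := -(1/2)) (by norm_num)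
  rw [intervalIntegrable_iff_integrableOn_Ioc_of_le ha.le] at h
  exact h.const_mul 2

lemma integrableOn_pow_log (n : ℕ) {a : ℝ} (ha : 0 < a) (ha1 : a ≤ 1) :
    IntegrableOn (fun x : ℝ => x ^ n * Real.log x) (Ioc 0 a) := by
  refine (integrableOn_bound ha).mono' ?_ ?_
  · exact ((measurable_id.pow_const n).mul Real.measurable_log).aestronglyMeasurable
  · rw [ae_restrict_iff' measurableSet_Ioc]
    filter_upwards with x hx
    have hx1 : x ≤ 1 := hx.2.trans ha1
    have hlog : Real.log x ≤ 0 := Real.log_nonpos hx.1.le hx1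
    have hxn : x ^ n ≤ 1 := pow_le_one₀ hx.1.le hx1
    have : ‖x ^ n * Real.log x‖ = x ^ n * (-Real.log x) := by
      rw [Real.norm_eq_abs, abs_of_nonpos (mul_nonpos_of_nonneg_of_nonpos (pow_nonneg hx.1.le n) hlog)]
      ring
    rw [this]
    calc x ^ n * (-Real.log x) ≤ 1 * (-Real.log x) := by
          apply mul_le_mul_of_nonneg_right hxn (by linarith)
      _ = -Real.log x := one_mul _
      _ ≤ 2 * x ^ (-(1/2):ℝ) := neg_log_le hx.1

lemma hasDerivAt_F (n : ℕ) {x : ℝ} (hx : 0 < x) :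
    HasDerivAt (fun y : ℝ => y ^ (n+1) * Real.log y / ((n:ℝ)+1) - y ^ (n+1) / (((n:ℝ)+1)^2))
      (x ^ n * Real.log x) x := by
  have h1 : HasDerivAt (fun y : ℝ => y ^ (n+1)) (((n:ℝ)+1) * x ^ n) x := by
    simpa using hasDerivAt_pow (n+1) x
  have h2 := (h1.mul (Real.hasDerivAt_log hx.ne')).div_const ((n:ℝ)+1)
  have h3 := h1.div_const (((n:ℝ)+1)^2)
  have h4 := h2.sub h3
  convert h4 using 1
  · rfl
  · rfl
  · rfl
  have hn : ((n:ℝ)+1) ≠ 0 := by positivity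
  field_simp
  ring

lemma integral_pow_log {a : ℝ} (ha : 0 < a) (ha1 : a ≤ 1) (n : ℕ) :
    ∫ x in Ioc (0:ℝ) a, x ^ n * Real.log x
      = a ^ (n+1) * Real.log a / ((n:ℝ)+1) - a ^ (n+1) / (((n:ℝ)+1)^2) := by
  rw [← intervalIntegral.integral_of_le ha.le]
  have hcont : ContinuousOn
      (fun y : ℝ => y ^ (n+1) * Real.log y / ((n:ℝ)+1) - y ^ (n+1) / (((n:ℝ)+1)^2))
      (Icc 0 a) := by
    have heq : (fun y : ℝ => y ^ (n+1) * Real.log y / ((n:ℝ)+1) - y ^ (n+1) / (((n:ℝ)+1)^2))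
        = fun y : ℝ => (y ^ n * (y * Real.log y)) / ((n:ℝ)+1) - y ^ (n+1) / (((n:ℝ)+1)^2) := by
      funext y; ring
    rw [heq]
    exact (((continuous_pow n).mul Real.continuous_mul_log).div_const _).sub
      ((continuous_pow (n+1)).div_const _) |>.continuousOn
  have hint : IntervalIntegrable (fun x : ℝ => x ^ n * Real.log x) volume 0 a :=
    (intervalIntegrable_iff_integrableOn_Ioc_of_le ha.le).2
      (integrableOn_pow_log n ha ha1)
  rw [intervalIntegral.integral_eq_sub_of_hasDerivAt_of_le ha.le hcont
    (fun x hx => hasDerivAt_F n hx.1) hint]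
  simp [zero_pow (Nat.succ_ne_zero n)]

lemma integral_norm_pow_log {a : ℝ} (ha : 0 < a) (ha1 : a ≤ 1) (n : ℕ) :
    ∫ x in Ioc (0:ℝ) a, ‖x ^ n * Real.log x‖
      = a ^ (n+1) / (((n:ℝ)+1)^2) - a ^ (n+1) * Real.log a / ((n:ℝ)+1) := by
  have h : ∀ x ∈ Ioc (0:ℝ) a, ‖x ^ n * Real.log x‖ = -(x ^ n * Real.log x) := by
    intro x hx
    rw [Real.norm_eq_abs, abs_of_nonpos (mul_nonpos_of_nonneg_of_nonpos (pow_nonneg hx.1.le n)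
      (Real.log_nonpos hx.1.le (hx.2.trans ha1)))]
  rw [MeasureTheory.setIntegral_congr_fun measurableSet_Ioc h, integral_neg,
    integral_pow_log ha ha1 n]
  ring



lemma hasSum_inv_sq : HasSum (fun n : ℕ => 1 / ((n:ℝ)+1)^2) (π^2/6) := by
  have h : HasSum (fun n : ℕ => (1:ℝ) / ((n+1:ℕ):ℝ)^2) (π^2/6) := by
    refine (hasSum_nat_add_iff (f := fun n : ℕ => (1:ℝ)/(n:ℝ)^2) 1).2 ?_
    simpa using hasSum_zeta_two
  convert h using 2 with n
  push_cast
  ring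

lemma summable_inv_sq : Summable (fun n : ℕ => 1 / ((n:ℝ)+1)^2) := hasSum_inv_sq.summable

lemma hasSum_odd_sq : HasSum (fun k : ℕ => 1 / (2*(k:ℝ)+1)^2) (π^2/8) := by
  set f : ℕ → ℝ := fun n => 1 / ((n:ℝ)+1)^2 with hf
  have hodd : HasSum (fun k : ℕ => f (2*k+1)) (π^2/24) := by
    have h := hasSum_inv_sq.mul_left (1/4 : ℝ)
    have he : (fun k : ℕ => (1/4:ℝ) * (1/((k:ℝ)+1)^2)) = fun k : ℕ => f (2*k+1) := by
      funext k; simp only [hf]; push_cast; field_simp; ring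
    rw [he] at h
    convert h using 1
    · rfl
    ring
  have hsE : Summable (fun k : ℕ => f (2*k)) := by
    refine Summable.of_nonneg_of_le (fun k => by positivity) (fun k => ?_) summable_inv_sq
    simp only [hf]
    apply one_div_le_one_div_of_le (by positivity)
    have : (0:ℝ) ≤ (k:ℝ) := Nat.cast_nonneg k
    push_cast
    nlinarith
  have hE : HasSum (fun k : ℕ => f (2*k)) (∑' k, f (2*k)) := hsE.hasSum
  have htot := HasSum.even_add_odd hE hodd
  have hval : ∑' k, f (2*k) = π^2/6 - π^2/24 := by
    have := hasSum_inv_sq.unique htot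
    linarith
  rw [hval] at hE
  have he2 : (fun k : ℕ => f (2*k)) = fun k : ℕ => 1 / (2*(k:ℝ)+1)^2 := by
    funext k; simp only [hf]; push_cast; ring_nf
  rw [he2] at hE
  convert hE using 1
  ring

lemma hasSum_eta : HasSum (fun n : ℕ => (-1:ℝ)^n / ((n:ℝ)+1)^2) (π^2/12) := by
  set g : ℕ → ℝ := fun n => (-1:ℝ)^n / ((n:ℝ)+1)^2 with hg
  have hE : HasSum (fun k : ℕ => g (2*k)) (π^2/8) := by
    have he : (fun k : ℕ => g (2*k)) = fun k : ℕ => 1 / (2*(k:ℝ)+1)^2 := by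
      funext k; simp only [hg, pow_mul, neg_one_sq, one_pow]; push_cast; ring_nf
    rw [he]; exact hasSum_odd_sq
  have hO : HasSum (fun k : ℕ => g (2*k+1)) (-(π^2/24)) := by
    have h := hasSum_inv_sq.mul_left (-(1/4) : ℝ)
    have he : (fun k : ℕ => (-(1/4):ℝ) * (1/((k:ℝ)+1)^2)) = fun k : ℕ => g (2*k+1) := by
      funext k; simp only [hg, pow_succ, pow_mul, neg_one_sq, one_pow]
      push_cast; field_simp; ring
    rw [he] at h
    convert h using 1
    · rfl
    ring
  have := HasSum.even_add_odd hE hO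
  convert this using 1
  ring

lemma hasSum_log_two : HasSum (fun n : ℕ => (1/2:ℝ)^(n+1) / ((n:ℝ)+1)) (Real.log 2) := by
  have h := Real.hasSum_pow_div_log_of_abs_lt_one (x := (1/2 : ℝ)) (by rw [abs_of_pos] <;> norm_num)
  convert h using 1
  rw [show (1:ℝ) - 1/2 = 2⁻¹ by norm_num, Real.log_inv]
  ring

lemma summable_geo_half : Summable (fun n : ℕ => (1/2:ℝ)^n) :=
  summable_geometric_of_lt_one (by norm_num) (by norm_num)

lemma le_geo (n : ℕ) (c : ℝ) (hc : 1 ≤ c) : (1/2:ℝ)^(n+1) / c ≤ (1/2:ℝ)^n := by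
  have h1 : (1/2:ℝ)^(n+1) / c ≤ (1/2:ℝ)^(n+1) := by
    apply div_le_self (by positivity) hc
  have h2 : (1/2:ℝ)^(n+1) ≤ (1/2:ℝ)^n := by
    rw [pow_succ]
    nlinarith [pow_pos (show (0:ℝ) < 1/2 by norm_num) n]
  linarith

lemma one_le_sq (n : ℕ) : (1:ℝ) ≤ ((n:ℝ)+1)^2 := by nlinarith [Nat.cast_nonneg (α := ℝ) n]

lemma one_le_lin (n : ℕ) : (1:ℝ) ≤ ((n:ℝ)+1) := by
  have : (0:ℝ) ≤ (n:ℝ) := Nat.cast_nonneg n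
  linarith

lemma summable_L : Summable (fun n : ℕ => (1/2:ℝ)^(n+1) / ((n:ℝ)+1)^2) :=
  Summable.of_nonneg_of_le (fun n => by positivity)
    (fun n => le_geo n _ (one_le_sq n)) summable_geo_half


lemma master {a : ℝ} (ha : 0 < a) (ha1 : a ≤ 1) (c : ℕ → ℝ) (m : ℕ → ℕ) (g : ℝ → ℝ)
    (hsum : Summable fun n : ℕ =>
      |c n| * (a^(m n+1)/(((m n : ℕ):ℝ)+1)^2 - a^(m n+1)*Real.log a/(((m n : ℕ):ℝ)+1)))
    (hpt : ∀ x ∈ Ioc (0:ℝ) a, HasSum (fun n : ℕ => c n * (x ^ (m n) * Real.log x)) (g x)) :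
    ∫ x in Ioc (0:ℝ) a, g x
      = ∑' n : ℕ, c n * (a^(m n+1)*Real.log a/(((m n : ℕ):ℝ)+1)
          - a^(m n+1)/(((m n : ℕ):ℝ)+1)^2) := by
  set F : ℕ → ℝ → ℝ := fun n x => c n * (x ^ (m n) * Real.log x) with hF
  have hint : ∀ n : ℕ, Integrable (F n) (volume.restrict (Ioc (0:ℝ) a)) :=
    fun n => (integrableOn_pow_log (m n) ha ha1).const_mul (c n)
  have hnorm : ∀ n : ℕ, (∫ x in Ioc (0:ℝ) a, ‖F n x‖)
      = |c n| * (a^(m n+1)/(((m n : ℕ):ℝ)+1)^2 - a^(m n+1)*Real.log a/(((m n : ℕ):ℝ)+1)) := by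
    intro n
    have heq : (fun x : ℝ => ‖F n x‖) = fun x : ℝ => |c n| * ‖x ^ (m n) * Real.log x‖ := by
      funext x
      simp [hF, norm_mul, Real.norm_eq_abs]
    rw [heq, MeasureTheory.integral_const_mul, integral_norm_pow_log ha ha1 (m n)]
  have hsum' : Summable fun n : ℕ => ∫ x in Ioc (0:ℝ) a, ‖F n x‖ := by
    simp_rw [hnorm]; exact hsum
  have key := MeasureTheory.integral_tsum_of_summable_integral_norm hint hsum'
  have hg : ∫ x in Ioc (0:ℝ) a, g x = ∫ x in Ioc (0:ℝ) a, (∑' n : ℕ, F n x) := by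
    refine MeasureTheory.setIntegral_congr_fun measurableSet_Ioc (fun x hx => ?_)
    exact ((hpt x hx).tsum_eq).symm
  rw [hg, ← key]
  refine tsum_congr (fun n => ?_)
  rw [hF]
  rw [MeasureTheory.integral_const_mul, integral_pow_log ha ha1 (m n)]

lemma P1 : ∫ x in Ioc (0:ℝ) 1, Real.log x / (x-2)
    = ∑' n : ℕ, (1/2:ℝ)^(n+1) / ((n:ℝ)+1)^2 := by
  have h := master (a := 1) one_pos le_rfl (fun n => -((1/2:ℝ)^(n+1))) (fun n => n)
    (fun x => Real.log x / (x-2)) ?_ ?_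
  · rw [h]
    refine tsum_congr (fun n => ?_)
    simp [Real.log_one]
    ring
  · refine Summable.of_nonneg_of_le (fun n => ?_) (fun n => ?_) summable_geo_half
    · have : Real.log 1 = 0 := Real.log_one
      simp [this]
      positivity
    · rw [show ((1:ℝ)^(n+1) : ℝ) = 1 from one_pow _, abs_neg, abs_pow, Real.log_one,
        show |(1/2:ℝ)| = 1/2 from by rw [abs_of_pos] <;> norm_num,
        mul_zero, zero_div, sub_zero, mul_one_div]
      exact le_geo n _ (one_le_sq n)
  · intro x hx
    have hx2 : x/2 < 1 := by linarith [hx.2]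
    have hg := hasSum_geometric_of_lt_one (by linarith [hx.1] : (0:ℝ) ≤ x/2) hx2
    have hc := hg.mul_left (-(Real.log x)/2)
    have hfun : (fun n : ℕ => (-(Real.log x)/2) * (x/2)^n)
        = fun n : ℕ => -((1/2:ℝ)^(n+1)) * (x ^ n * Real.log x) := by
      funext n
      rw [div_pow, div_pow, one_pow, pow_succ]
      field_simp
    rw [hfun] at hc
    convert hc using 1
    · rfl
    have hx2' : x - 2 ≠ 0 := by intro h; nlinarith [hx.2]
    have h2x : (2:ℝ) - x ≠ 0 := by intro h; nlinarith [hx.2]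
    rw [show (1:ℝ) - x/2 = (2-x)/2 by ring, inv_div]
    field_simp [hx2', h2x]
    ring

lemma P2 : ∫ x in Ioc (0:ℝ) 1, x * Real.log x / (x^2+1) = -(π^2/48) := by
  have h := master (a := 1) one_pos le_rfl (fun n => (-1:ℝ)^n) (fun n => 2*n+1)
    (fun x => x * Real.log x / (x^2+1)) ?_ ?_
  · rw [h]
    have he := (hasSum_eta.mul_left (-(1/4):ℝ))
    have hfun : (fun n : ℕ => (-(1/4):ℝ) * ((-1:ℝ)^n / ((n:ℝ)+1)^2))
        = fun n : ℕ => (-1:ℝ)^n * ((1:ℝ)^(2*n+1+1)*Real.log 1/(((2*n+1:ℕ):ℝ)+1)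
          - (1:ℝ)^(2*n+1+1)/(((2*n+1:ℕ):ℝ)+1)^2) := by
      funext n
      rw [Real.log_one, one_pow]
      push_cast
      have : ((n:ℝ)+1)^2 ≠ 0 := by positivity
      field_simp
      ring
    rw [hfun] at he
    rw [he.tsum_eq]
    ring
  · refine Summable.of_nonneg_of_le (fun n => ?_) (fun n => ?_) summable_inv_sq
    · simp only [Real.log_one, mul_zero, zero_div, sub_zero, one_pow]
      positivity
    · rw [Real.log_one, one_pow, abs_pow, abs_neg, abs_one, one_pow, one_mul,
        mul_zero, zero_div, sub_zero]
      push_cast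
      apply one_div_le_one_div_of_le (by positivity)
      nlinarith [Nat.cast_nonneg (α := ℝ) n]
  · intro x hx
    rcases eq_or_lt_of_le hx.2 with heq | hlt
    · subst heq
      rw [Real.log_one]
      simpa using hasSum_zero
    · have hg := hasSum_geometric_of_norm_lt_one (ξ := -x^2)
        (by rw [norm_neg, Real.norm_eq_abs, abs_of_nonneg (by positivity)]; nlinarith [hx.1])
      have hc := hg.mul_left (x * Real.log x)
      have hfun : (fun n : ℕ => (x * Real.log x) * (-x^2)^n)
          = fun n : ℕ => (-1:ℝ)^n * (x ^ (2*n+1) * Real.log x) := by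
        funext n
        rw [neg_pow, ← pow_mul]
        ring
      rw [hfun] at hc
      convert hc using 1
      · rfl
      rw [sub_neg_eq_add]
      have h1 : (1:ℝ) + x^2 ≠ 0 := by positivity
      rw [eq_comm, mul_comm, inv_mul_eq_div, div_eq_div_iff h1 (by positivity : (x^2+1:ℝ) ≠ 0)]
      ring

lemma P3 : ∫ x in Ioc (0:ℝ) 1, Real.log x / (x^2+1)
    = ∑' n : ℕ, -((-1:ℝ)^n / (2*(n:ℝ)+1)^2) := by
  have h := master (a := 1) one_pos le_rfl (fun n => (-1:ℝ)^n) (fun n => 2*n)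
    (fun x => Real.log x / (x^2+1)) ?_ ?_
  · rw [h]
    refine tsum_congr (fun n => ?_)
    rw [Real.log_one, one_pow]
    push_cast
    have : (2*(n:ℝ)+1)^2 ≠ 0 := by positivity
    field_simp
    ring
  · refine Summable.of_nonneg_of_le (fun n => ?_) (fun n => ?_) summable_inv_sq
    · simp only [Real.log_one, mul_zero, zero_div, sub_zero, one_pow]
      positivity
    · rw [Real.log_one, one_pow, abs_pow, abs_neg, abs_one, one_pow, one_mul,
        mul_zero, zero_div, sub_zero]
      push_cast
      apply one_div_le_one_div_of_le (by positivity)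
      nlinarith [Nat.cast_nonneg (α := ℝ) n]
  · intro x hx
    rcases eq_or_lt_of_le hx.2 with heq | hlt
    · subst heq
      rw [Real.log_one]
      simpa using hasSum_zero
    · have hg := hasSum_geometric_of_norm_lt_one (ξ := -x^2)
        (by rw [norm_neg, Real.norm_eq_abs, abs_of_nonneg (by positivity)]; nlinarith [hx.1])
      have hc := hg.mul_left (Real.log x)
      have hfun : (fun n : ℕ => (Real.log x) * (-x^2)^n)
          = fun n : ℕ => (-1:ℝ)^n * (x ^ (2*n) * Real.log x) := by
        funext n
        rw [neg_pow, ← pow_mul]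
        ring
      rw [hfun] at hc
      convert hc using 1
      · rfl
      rw [sub_neg_eq_add]
      have h1 : (1:ℝ) + x^2 ≠ 0 := by positivity
      rw [eq_comm, mul_comm, inv_mul_eq_div, div_eq_div_iff h1 (by positivity : (x^2+1:ℝ) ≠ 0)]
      ring

lemma K_val : ∫ x in Ioc (0:ℝ) 1, Real.log x / (x-1) = π^2/6 := by
  have h := master (a := 1) one_pos le_rfl (fun _ => (-1:ℝ)) (fun n => n)
    (fun x => Real.log x / (x-1)) ?_ ?_
  · rw [h]
    have hfun : (fun n : ℕ => (1:ℝ) / ((n:ℝ)+1)^2)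
        = fun n : ℕ => (-1:ℝ) * ((1:ℝ)^(n+1)*Real.log 1/((n:ℝ)+1) - (1:ℝ)^(n+1)/((n:ℝ)+1)^2) := by
      funext n
      rw [Real.log_one, one_pow]
      ring
    have hZ := hasSum_inv_sq
    rw [hfun] at hZ
    exact hZ.tsum_eq
  · refine Summable.of_nonneg_of_le (fun n => ?_) (fun n => ?_) summable_inv_sq
    · simp only [Real.log_one, mul_zero, zero_div, sub_zero, one_pow]
      positivity
    · rw [Real.log_one, one_pow, abs_neg, abs_one, one_mul, mul_zero, zero_div, sub_zero]
  · intro x hx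
    rcases eq_or_lt_of_le hx.2 with heq | hlt
    · subst heq
      rw [Real.log_one]
      simpa using hasSum_zero
    · have hg := hasSum_geometric_of_lt_one hx.1.le hlt
      have hc := hg.mul_left (-Real.log x)
      have hfun : (fun n : ℕ => (-Real.log x) * x^n)
          = fun n : ℕ => (-1:ℝ) * (x ^ n * Real.log x) := by
        funext n; ring
      rw [hfun] at hc
      convert hc using 1
      · rfl
      have h1 : x - 1 ≠ 0 := by intro hh; nlinarith
      have h2 : (1:ℝ) - x ≠ 0 := by intro hh; nlinarith
      rw [eq_comm, mul_comm, inv_mul_eq_div, div_eq_div_iff h2 h1]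
      ring

lemma log_half : Real.log ((1:ℝ)/2) = -Real.log 2 := by
  rw [one_div, Real.log_inv]

lemma K2_val : ∫ x in Ioc (0:ℝ) (1/2), Real.log x / (x-1)
    = (Real.log 2)^2 + ∑' n : ℕ, (1/2:ℝ)^(n+1) / ((n:ℝ)+1)^2 := by
  have h := master (a := 1/2) (by norm_num) (by norm_num) (fun _ => (-1:ℝ)) (fun n => n)
    (fun x => Real.log x / (x-1)) ?_ ?_
  · rw [h]
    have hs := (hasSum_log_two.mul_left (Real.log 2)).add summable_L.hasSum
    have hfun : (fun n : ℕ => Real.log 2 * ((1/2:ℝ)^(n+1)/((n:ℝ)+1)) + (1/2:ℝ)^(n+1)/((n:ℝ)+1)^2)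
        = fun n : ℕ => (-1:ℝ) * ((1/2:ℝ)^(n+1)*Real.log (1/2)/((n:ℝ)+1)
            - (1/2:ℝ)^(n+1)/((n:ℝ)+1)^2) := by
      funext n
      rw [log_half]
      ring
    rw [hfun] at hs
    rw [hs.tsum_eq]
    ring
  · have hs := summable_L.add ((hasSum_log_two.mul_left (Real.log 2)).summable)
    have hfun : (fun n : ℕ => (1/2:ℝ)^(n+1)/((n:ℝ)+1)^2 + Real.log 2 * ((1/2:ℝ)^(n+1)/((n:ℝ)+1)))
        = fun n : ℕ => |(-1:ℝ)| * ((1/2:ℝ)^(n+1)/((n:ℝ)+1)^2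
            - (1/2:ℝ)^(n+1)*Real.log (1/2)/((n:ℝ)+1)) := by
      funext n
      rw [log_half, abs_neg, abs_one]
      ring
    rw [hfun] at hs
    exact hs
  · intro x hx
    have hlt : x < 1 := lt_of_le_of_lt hx.2 (by norm_num)
    have hg := hasSum_geometric_of_lt_one hx.1.le hlt
    have hc := hg.mul_left (-Real.log x)
    have hfun : (fun n : ℕ => (-Real.log x) * x^n)
        = fun n : ℕ => (-1:ℝ) * (x ^ n * Real.log x) := by
      funext n; ring
    rw [hfun] at hc
    convert hc using 1
    · rfl
    have h1 : x - 1 ≠ 0 := by intro hh; nlinarith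
    have h2 : (1:ℝ) - x ≠ 0 := by intro hh; nlinarith
    rw [eq_comm, mul_comm, inv_mul_eq_div, div_eq_div_iff h2 h1]
    ring

lemma K3_val : ∫ x in Ioc ((1/2):ℝ) 1, Real.log x / (x-1)
    = ∑' n : ℕ, (1/2:ℝ)^(n+1) / ((n:ℝ)+1)^2 := by
  rw [← intervalIntegral.integral_of_le (by norm_num : ((1/2):ℝ) ≤ 1)]
  have hsub := intervalIntegral.integral_comp_sub_left (a := 0) (b := 1/2)
    (fun y : ℝ => Real.log y / (y-1)) 1
  rw [show (1:ℝ)-1/2 = 1/2 by norm_num, show (1:ℝ)-0 = 1 by norm_num] at hsub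
  rw [← hsub, intervalIntegral.integral_of_le (by norm_num : (0:ℝ) ≤ 1/2)]
  set F : ℕ → ℝ → ℝ := fun n x => x ^ n / ((n:ℝ)+1) with hF
  have hint : ∀ n : ℕ, Integrable (F n) (volume.restrict (Ioc (0:ℝ) (1/2))) := by
    intro n
    exact ((continuous_pow n).div_const _).integrableOn_Ioc
  have hval : ∀ n : ℕ, (∫ x in Ioc (0:ℝ) (1/2), F n x) = (1/2:ℝ)^(n+1) / ((n:ℝ)+1)^2 := by
    intro n
    have heq : (fun x : ℝ => F n x) = fun x : ℝ => (((n:ℝ)+1))⁻¹ * x ^ n := by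
      funext x; rw [hF]; ring
    rw [heq, MeasureTheory.integral_const_mul,
      ← intervalIntegral.integral_of_le (by norm_num : (0:ℝ) ≤ 1/2), integral_pow]
    have h0 : ((0:ℝ))^(n+1) = 0 := zero_pow (Nat.succ_ne_zero n)
    rw [h0]
    push_cast
    have hne : ((n:ℝ)+1) ≠ 0 := by positivity
    field_simp
    ring
  have hnorm : ∀ n : ℕ, (∫ x in Ioc (0:ℝ) (1/2), ‖F n x‖) = (1/2:ℝ)^(n+1) / ((n:ℝ)+1)^2 := by
    intro n
    rw [← hval n]
    refine MeasureTheory.setIntegral_congr_fun measurableSet_Ioc (fun x hx => ?_)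
    simp only [hF]
    rw [Real.norm_eq_abs, abs_of_nonneg (div_nonneg (pow_nonneg hx.1.le n) (by positivity))]
  have hsum' : Summable fun n : ℕ => ∫ x in Ioc (0:ℝ) (1/2), ‖F n x‖ := by
    simp_rw [hnorm]; exact summable_L
  have key := MeasureTheory.integral_tsum_of_summable_integral_norm hint hsum'
  have hg : ∫ x in Ioc (0:ℝ) (1/2), (fun y : ℝ => Real.log y/(y-1)) (1-x)
      = ∫ x in Ioc (0:ℝ) (1/2), (∑' n : ℕ, F n x) := by
    refine MeasureTheory.setIntegral_congr_fun measurableSet_Ioc (fun x hx => ?_)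
    show Real.log (1-x) / (1-x-1) = _
    have hx0 : x ≠ 0 := hx.1.ne'
    have habs : |x| < 1 := by
      rw [abs_of_pos hx.1]; linarith [hx.2]
    have hls := Real.hasSum_pow_div_log_of_abs_lt_one habs
    have hc := hls.mul_left x⁻¹
    have hfun : (fun n : ℕ => x⁻¹ * (x^(n+1)/((n:ℝ)+1))) = fun n : ℕ => F n x := by
      funext n
      simp only [hF]
      rw [pow_succ]
      field_simp
    rw [hfun] at hc
    have hv : x⁻¹ * -Real.log (1-x) = Real.log (1-x) / (1-x-1) := by
      rw [show (1:ℝ)-x-1 = -x by ring, div_neg, inv_mul_eq_div, neg_div]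
    rw [hv] at hc
    exact hc.tsum_eq.symm
  rw [hg, ← key]
  exact tsum_congr hval

lemma integrableOn_K : IntegrableOn (fun x : ℝ => Real.log x/(x-1)) (Ioc 0 1) := by
  have hbd : IntegrableOn (fun x : ℝ => 2*(2*x^(-(1/2):ℝ)) + 2) (Ioc (0:ℝ) 1) :=
    ((integrableOn_bound one_pos).const_mul 2).add
      (integrableOn_const measure_Ioc_lt_top.ne)
  refine hbd.mono' ?_ ?_
  · exact (Real.measurable_log.div (measurable_id.sub measurable_const)).aestronglyMeasurable
  · rw [ae_restrict_iff' measurableSet_Ioc]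
    filter_upwards with x hx
    have hx0 := hx.1
    have hx1 := hx.2
    have hb := neg_log_le hx0
    have hrp : (0:ℝ) ≤ x^(-(1/2):ℝ) := (Real.rpow_pos_of_pos hx0 _).le
    have hlog : Real.log x ≤ 0 := Real.log_nonpos hx0.le hx1
    rcases eq_or_lt_of_le hx1 with heq | hlt
    · subst heq
      simp [Real.log_one]
      positivity
    · have h1x : (0:ℝ) < 1 - x := by linarith
      have hnorm : ‖Real.log x/(x-1)‖ = -Real.log x/(1-x) := by
        rw [Real.norm_eq_abs, abs_div, abs_of_nonpos hlog,
          abs_of_neg (by linarith : x-1 < 0), show -(x-1) = 1-x by ring]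
      rw [hnorm]
      rcases le_or_gt x (1/2) with hhalf | hhalf
      · have h2 : -Real.log x/(1-x) ≤ -Real.log x * 2 := by
          rw [div_le_iff₀ h1x]
          nlinarith
        calc -Real.log x/(1-x) ≤ -Real.log x * 2 := h2
          _ ≤ 2*x^(-(1/2):ℝ) * 2 := by nlinarith
          _ ≤ 2*(2*x^(-(1/2):ℝ)) + 2 := by nlinarith
      · have hli : -Real.log x ≤ (1-x)/x := by
          have h := Real.log_le_sub_one_of_pos (show (0:ℝ) < x⁻¹ by positivity)
          rw [Real.log_inv] at h
          have h2 : x⁻¹ - 1 = (1-x)/x := by field_simp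
          linarith [h, h2.le, h2.ge]
        have h3 : -Real.log x/(1-x) ≤ 2 := by
          rw [div_le_iff₀ h1x]
          have h4 : (1-x)/x ≤ 2*(1-x) := by
            rw [div_le_iff₀ hx0]
            nlinarith
          nlinarith
        calc -Real.log x/(1-x) ≤ 2 := h3
          _ ≤ 2*(2*x^(-(1/2):ℝ)) + 2 := by nlinarith

lemma L_val : ∑' n : ℕ, (1/2:ℝ)^(n+1)/((n:ℝ)+1)^2 = π^2/12 - (Real.log 2)^2/2 := by
  have hsplit : ∫ x in Ioc (0:ℝ) 1, Real.log x/(x-1)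
      = (∫ x in Ioc (0:ℝ) (1/2), Real.log x/(x-1))
        + ∫ x in Ioc ((1/2):ℝ) 1, Real.log x/(x-1) := by
    rw [← MeasureTheory.setIntegral_union (Set.Ioc_disjoint_Ioc_of_le le_rfl) measurableSet_Ioc
      (integrableOn_K.mono_set (Set.Ioc_subset_Ioc_right (by norm_num)))
      (integrableOn_K.mono_set (Set.Ioc_subset_Ioc_left (by norm_num))),
      Set.Ioc_union_Ioc_eq_Ioc (by norm_num) (by norm_num)]
  rw [K_val, K2_val, K3_val] at hsplit
  linarith

lemma int_g1 : IntegrableOn (fun x : ℝ => Real.log x/(x-2)) (Ioc (0:ℝ) 1) := by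
  refine (integrableOn_bound one_pos).mono' ?_ ?_
  · exact (Real.measurable_log.div (measurable_id.sub measurable_const)).aestronglyMeasurable
  · rw [ae_restrict_iff' measurableSet_Ioc]
    filter_upwards with x hx
    have hlog : Real.log x ≤ 0 := Real.log_nonpos hx.1.le hx.2
    have hb := neg_log_le hx.1
    have h2 : (0:ℝ) < 2 - x := by linarith [hx.2]
    have hnorm : ‖Real.log x/(x-2)‖ = -Real.log x/(2-x) := by
      rw [Real.norm_eq_abs, abs_div, abs_of_nonpos hlog,
        abs_of_neg (by linarith : x-2 < 0), show -(x-2) = 2-x by ring]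
    rw [hnorm]
    have h3 : -Real.log x/(2-x) ≤ -Real.log x := by
      apply div_le_self (by linarith) (by linarith [hx.2])
    linarith

lemma int_g2 : IntegrableOn (fun x : ℝ => x*Real.log x/(x^2+1)) (Ioc (0:ℝ) 1) := by
  refine (integrableOn_bound one_pos).mono' ?_ ?_
  · exact ((measurable_id.mul Real.measurable_log).div
      ((measurable_id.pow_const 2).add measurable_const)).aestronglyMeasurable
  · rw [ae_restrict_iff' measurableSet_Ioc]
    filter_upwards with x hx
    have hlog : Real.log x ≤ 0 := Real.log_nonpos hx.1.le hx.2
    have hb := neg_log_le hx.1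
    have hpos : (0:ℝ) < x^2+1 := by positivity
    have hnorm : ‖x*Real.log x/(x^2+1)‖ = x*(-Real.log x)/(x^2+1) := by
      rw [Real.norm_eq_abs, abs_div, abs_of_pos hpos,
        abs_of_nonpos (mul_nonpos_of_nonneg_of_nonpos hx.1.le hlog), show -(x*Real.log x) = x*(-Real.log x) by ring]
    rw [hnorm]
    have h3 : x*(-Real.log x)/(x^2+1) ≤ -Real.log x := by
      rw [div_le_iff₀ hpos]
      nlinarith [hx.1.le, hx.2, sq_nonneg x]
    linarith

lemma int_g3 : IntegrableOn (fun x : ℝ => Real.log x/(x^2+1)) (Ioc (0:ℝ) 1) := by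
  refine (integrableOn_bound one_pos).mono' ?_ ?_
  · exact (Real.measurable_log.div
      ((measurable_id.pow_const 2).add measurable_const)).aestronglyMeasurable
  · rw [ae_restrict_iff' measurableSet_Ioc]
    filter_upwards with x hx
    have hlog : Real.log x ≤ 0 := Real.log_nonpos hx.1.le hx.2
    have hb := neg_log_le hx.1
    have hpos : (0:ℝ) < x^2+1 := by positivity
    have hnorm : ‖Real.log x/(x^2+1)‖ = -Real.log x/(x^2+1) := by
      rw [Real.norm_eq_abs, abs_div, abs_of_pos hpos, abs_of_nonpos hlog]
    rw [hnorm]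
    have h3 : -Real.log x/(x^2+1) ≤ -Real.log x := by
      apply div_le_self (by linarith) (by nlinarith [sq_nonneg x])
    linarith

end Aux

/-- Catalan's constant. -/
noncomputable def catalan' : ℝ := ∑' j : ℕ, (-1) ^ j / (2 * (j : ℝ) + 1) ^ 2

theorem stmt_7 :
    ∫ x in (0:ℝ)..1, Real.log x / ((x - 2) * (x ^ 2 + 1)) =
      π ^ 2 / 48 - (Real.log 2) ^ 2 / 10 + (2 / 5) * catalan' := by
  rw [intervalIntegral.integral_of_le zero_le_one]
  have hdecomp : ∀ x ∈ Ioc (0:ℝ) 1, Real.log x/((x-2)*(x^2+1))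
      = (1/5) * (Real.log x/(x-2)) - (1/5) * (x*Real.log x/(x^2+1))
        - (2/5) * (Real.log x/(x^2+1)) := by
    intro x hx
    have h2 : x - 2 ≠ 0 := by intro h; nlinarith [hx.2]
    have h3 : (x^2+1 : ℝ) ≠ 0 := by positivity
    field_simp
    ring
  rw [MeasureTheory.setIntegral_congr_fun measurableSet_Ioc hdecomp]
  have h1 : Integrable (fun x : ℝ => 1/5 * (Real.log x/(x-2))) (volume.restrict (Ioc 0 1)) :=
    Aux.int_g1.const_mul (1/5)
  have h2 : Integrable (fun x : ℝ => 1/5 * (x*Real.log x/(x^2+1))) (volume.restrict (Ioc 0 1)) :=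
    Aux.int_g2.const_mul (1/5)
  have h3 : Integrable (fun x : ℝ => 2/5 * (Real.log x/(x^2+1))) (volume.restrict (Ioc 0 1)) :=
    Aux.int_g3.const_mul (2/5)
  have h12 : Integrable (fun x : ℝ => 1/5 * (Real.log x/(x-2)) - 1/5 * (x*Real.log x/(x^2+1)))
      (volume.restrict (Ioc 0 1)) := h1.sub h2
  rw [MeasureTheory.integral_sub h12 h3,
    MeasureTheory.integral_sub h1 h2,
    MeasureTheory.integral_const_mul, MeasureTheory.integral_const_mul,
    MeasureTheory.integral_const_mul]
  rw [Aux.P1, Aux.L_val, Aux.P2, Aux.P3]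
  have hcat : ∑' n : ℕ, -((-1:ℝ)^n / (2*(n:ℝ)+1)^2) = -catalan' := by
    rw [tsum_neg, catalan']
  rw [hcat]
  ring
end

section
/- The integral from 0 to 1 of ln(x)/(x-2) dx equals π²/12 - (ln 2)²/2. -/
open Real MeasureTheory Set

lemma aux_summable : Summable (fun n : ℕ => 1 / ((n : ℝ) + 1) ^ 2) := by
  have h := (summable_nat_add_iff 1).mpr (Real.summable_one_div_nat_pow.mpr (by norm_num : 1 < 2))
  refine h.congr fun n => ?_
  push_cast
  ring

lemma aux_summable_c {c : ℝ} (hc0 : 0 ≤ c) (hc1 : c ≤ 1) :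
    Summable (fun n : ℕ => c^(n+1) / ((n : ℝ) + 1) ^ 2) := by
  refine Summable.of_nonneg_of_le (fun n => by positivity) (fun n => ?_) aux_summable
  have h1 : c^(n+1) ≤ 1 := pow_le_one₀ hc0 hc1
  gcongr

lemma cont_pow_log (n : ℕ) : Continuous (fun y : ℝ => y ^ (n+1) * Real.log y) := by
  have : (fun y : ℝ => y ^ (n+1) * Real.log y) = fun y => y ^ n * (y * Real.log y) := by
    funext y; ring
  rw [this]
  exact (continuous_pow n).mul Real.continuous_mul_log

lemma hasDeriv_G (n : ℕ) {x : ℝ} (hx : 0 < x) :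
    HasDerivAt (fun y : ℝ => y^(n+1)/((n:ℝ)+1)^2 - y^(n+1) * Real.log y / ((n:ℝ)+1))
      (x ^ n * (-Real.log x)) x := by
  have h1 : HasDerivAt (fun y : ℝ => y ^ (n+1)) (((n:ℝ)+1) * x ^ n) x := by
    simpa using hasDerivAt_pow (n+1) x
  have h2 : HasDerivAt Real.log x⁻¹ x := Real.hasDerivAt_log hx.ne'
  have h := (h1.div_const (((n:ℝ)+1)^2)).sub ((h1.mul h2).div_const ((n:ℝ)+1))
  refine h.congr_deriv ?_
  have hn : ((n:ℝ)+1) ≠ 0 := by positivity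
  field_simp
  ring

lemma cont_G (n : ℕ) :
    Continuous (fun y : ℝ => y^(n+1)/((n:ℝ)+1)^2 - y^(n+1) * Real.log y / ((n:ℝ)+1)) :=
  ((continuous_pow (n+1)).div_const _).sub ((cont_pow_log n).div_const _)

lemma integrableOn_pow_neg_log (n : ℕ) {c : ℝ} (hc1 : c ≤ 1) :
    IntegrableOn (fun x : ℝ => x ^ n * (-Real.log x)) (Ioc 0 c) := by
  apply intervalIntegral.integrableOn_deriv_of_nonneg ((cont_G n).continuousOn)
    (fun x hx => hasDeriv_G n hx.1)
  intro x hx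
  have h1 : Real.log x ≤ 0 := Real.log_nonpos hx.1.le (by linarith [hx.2])
  have h2 : 0 ≤ x ^ n := pow_nonneg hx.1.le n
  nlinarith

lemma integral_pow_neg_log (n : ℕ) {c : ℝ} (hc0 : 0 < c) (hc1 : c ≤ 1) :
    ∫ x in Ioo (0:ℝ) c, x ^ n * (-Real.log x)
      = c^(n+1)/((n:ℝ)+1)^2 - c^(n+1) * Real.log c / ((n:ℝ)+1) := by
  rw [← integral_Ioc_eq_integral_Ioo, ← intervalIntegral.integral_of_le hc0.le]
  rw [intervalIntegral.integral_eq_sub_of_hasDerivAt_of_le hc0.le ((cont_G n).continuousOn)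
    (fun x hx => hasDeriv_G n hx.1)
    ((intervalIntegrable_iff_integrableOn_Ioc_of_le hc0.le).mpr
      (integrableOn_pow_neg_log n hc1))]
  simp

lemma integral_pow_div (n : ℕ) {c : ℝ} (hc0 : 0 < c) :
    ∫ x in Ioo (0:ℝ) c, x ^ n / ((n:ℝ)+1) = c^(n+1)/((n:ℝ)+1)^2 := by
  rw [← integral_Ioc_eq_integral_Ioo, ← intervalIntegral.integral_of_le hc0.le,
    intervalIntegral.integral_div, integral_pow]
  have hn : ((n:ℝ)+1) ≠ 0 := by positivity
  field_simp
  ring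

lemma interchange {c : ℝ} (F : ℕ → ℝ → ℝ) (g : ℝ → ℝ) (v : ℕ → ℝ)
    (hsum : ∀ x ∈ Ioo (0:ℝ) c, HasSum (fun n => F n x) (g x))
    (hint : ∀ n, IntegrableOn (F n) (Ioo (0:ℝ) c))
    (hnonneg : ∀ n, ∀ x ∈ Ioo (0:ℝ) c, 0 ≤ F n x)
    (hval : ∀ n, ∫ x in Ioo (0:ℝ) c, F n x = v n)
    (hv : Summable v) :
    ∫ x in Ioo (0:ℝ) c, g x = ∑' n, v n := by
  have hmeas : MeasurableSet (Ioo (0:ℝ) c) := measurableSet_Ioo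
  have hnorm : ∀ n, ∫ x in Ioo (0:ℝ) c, ‖F n x‖ = v n := by
    intro n
    rw [← hval n]
    exact setIntegral_congr_fun hmeas fun x hx => Real.norm_of_nonneg (hnonneg n x hx)
  have h1 : ∫ x in Ioo (0:ℝ) c, g x = ∫ x in Ioo (0:ℝ) c, (∑' n, F n x) :=
    setIntegral_congr_fun hmeas fun x hx => ((hsum x hx).tsum_eq).symm
  rw [h1, ← MeasureTheory.integral_tsum_of_summable_integral_norm hint
    (by simpa only [hnorm] using hv)]
  exact tsum_congr hval

/-- Step 1: the main integral as a series. -/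
lemma step1 : ∫ x in Ioo (0:ℝ) 1, Real.log x / (x - 2)
    = ∑' n : ℕ, (1/2:ℝ)^(n+1) / ((n:ℝ)+1)^2 := by
  apply interchange (fun n x => (1/2:ℝ)^(n+1) * (x^n * (-Real.log x)))
  · intro x hx
    have hx0 := hx.1
    have hx1 := hx.2
    have hgeo : HasSum (fun n : ℕ => (x/2)^n) ((1 - x/2)⁻¹) :=
      hasSum_geometric_of_lt_one (by linarith) (by linarith)
    have h := hgeo.mul_left (-Real.log x / 2)
    have hfe : (fun n : ℕ => (1/2:ℝ)^(n+1) * (x^n * (-Real.log x)))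
        = fun n : ℕ => -Real.log x / 2 * (x/2)^n := by
      funext n
      rw [div_pow, div_pow]
      ring
    rw [hfe]
    refine cast (congrArg (fun a => HasSum (fun n : ℕ => -Real.log x / 2 * (x/2)^n) a)
      (Eq.symm (?_ : Real.log x / (x - 2) = -Real.log x / 2 * (1 - x/2)⁻¹))) h
    have hne : (1 - x/2) ≠ 0 := by intro h'; nlinarith
    have hne2 : x - 2 ≠ 0 := by intro h'; nlinarith
    rw [inv_eq_one_div, mul_one_div, div_div]
    rw [div_eq_div_iff hne2 (by intro h'; nlinarith : (2:ℝ)*(1 - x/2) ≠ 0)]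
    ring
  · intro n
    exact (((integrableOn_pow_neg_log n le_rfl).mono_set Ioo_subset_Ioc_self).const_mul _)
  · intro n x hx
    have h1 : Real.log x ≤ 0 := Real.log_nonpos hx.1.le (by linarith [hx.2])
    have h2 : 0 ≤ x ^ n := pow_nonneg hx.1.le n
    have h3 : (0:ℝ) ≤ (1/2:ℝ)^(n+1) := by positivity
    exact mul_nonneg h3 (mul_nonneg h2 (by linarith))
  · intro n
    rw [MeasureTheory.integral_const_mul, integral_pow_neg_log n one_pos le_rfl]
    simp [div_eq_mul_inv]
  · exact aux_summable_c (by norm_num) (by norm_num)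

/-- Step 2: `∫₀ᶜ -log(1-x)/x` as a series, for `0 < c ≤ 1`. -/
lemma step2 {c : ℝ} (hc0 : 0 < c) (hc1 : c ≤ 1) :
    ∫ x in Ioo (0:ℝ) c, (-Real.log (1-x)) / x
      = ∑' n : ℕ, c^(n+1) / ((n:ℝ)+1)^2 := by
  apply interchange (fun n x => x^n / ((n:ℝ)+1))
  · intro x hx
    have hx0 := hx.1
    have hx1 : x < 1 := lt_of_lt_of_le hx.2 hc1
    have h := Real.hasSum_pow_div_log_of_abs_lt_one
      (x := x) (abs_lt.mpr ⟨by linarith, hx1⟩)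
    have h2 := h.div_const x
    have hfe : (fun n : ℕ => x^n / ((n:ℝ)+1))
        = fun n : ℕ => x ^ (n+1) / ((n:ℝ)+1) / x := by
      funext n
      rw [pow_succ]
      field_simp
    rw [hfe]
    exact h2
  · intro n
    exact (((continuous_pow n).div_const _).intervalIntegrable 0 c).1.mono_set
      Ioo_subset_Ioc_self
  · intro n x hx
    have := hx.1
    positivity
  · intro n
    exact integral_pow_div n hc0
  · exact aux_summable_c hc0.le hc1

/-- Step 3: `∫₀^{1/2} -log x/(1-x)` as a series. -/
lemma step3 : ∫ x in Ioo (0:ℝ) (1/2:ℝ), (-Real.log x) / (1-x)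
    = (∑' n : ℕ, (1/2:ℝ)^(n+1) / ((n:ℝ)+1)^2) + Real.log 2 * Real.log 2 := by
  have hlog : Real.log (1/2 : ℝ) = -Real.log 2 := by
    rw [one_div, Real.log_inv]
  have hsum2 : HasSum (fun n : ℕ => (1/2:ℝ)^(n+1) / ((n:ℝ)+1)) (Real.log 2) := by
    have h := Real.hasSum_pow_div_log_of_abs_lt_one (x := (1/2:ℝ)) (by rw [abs_of_pos] <;> norm_num)
    have : -Real.log (1 - 1/2 : ℝ) = Real.log 2 := by
      norm_num [hlog]
    rw [this] at h
    exact h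
  have hkey : ∫ x in Ioo (0:ℝ) (1/2:ℝ), (-Real.log x) / (1-x)
      = ∑' n : ℕ, ((1/2:ℝ)^(n+1) / ((n:ℝ)+1)^2 + Real.log 2 * ((1/2:ℝ)^(n+1) / ((n:ℝ)+1))) := by
    apply interchange (fun n x => x^n * (-Real.log x))
    · intro x hx
      have hx0 := hx.1
      have hx1 : x < 1 := by linarith [hx.2]
      have hgeo : HasSum (fun n : ℕ => x^n) ((1 - x)⁻¹) :=
        hasSum_geometric_of_lt_one hx0.le hx1
      have h := hgeo.mul_left (-Real.log x)
      have hfe : (fun n : ℕ => x^n * (-Real.log x)) = fun n : ℕ => -Real.log x * x^n := by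
        funext n; ring
      rw [hfe, div_eq_mul_inv]
      exact h
    · intro n
      exact (integrableOn_pow_neg_log n (by norm_num)).mono_set Ioo_subset_Ioc_self
    · intro n x hx
      have h1 : Real.log x ≤ 0 := Real.log_nonpos hx.1.le (by linarith [hx.2])
      have h2 : 0 ≤ x ^ n := pow_nonneg hx.1.le n
      nlinarith
    · intro n
      rw [integral_pow_neg_log n (by norm_num) (by norm_num), hlog]
      ring
    · exact Summable.add (aux_summable_c (by norm_num) (by norm_num))
        (hsum2.summable.mul_left _)
  rw [hkey, Summable.tsum_add (aux_summable_c (by norm_num) (by norm_num))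
    (hsum2.summable.mul_left _), tsum_mul_left, hsum2.tsum_eq]

lemma basel_shift : ∑' n : ℕ, 1 / ((n:ℝ)+1)^2 = π^2/6 := by
  have h := hasSum_zeta_two
  have hs := h.summable
  have h0 := hs.tsum_eq_zero_add
  rw [h.tsum_eq] at h0
  have : (1:ℝ) / ((0:ℕ):ℝ)^2 = 0 := by norm_num
  rw [this, zero_add] at h0
  rw [h0]
  apply tsum_congr
  intro n
  push_cast
  ring

lemma sub_step : ∫ x in Ioo (1/2:ℝ) 1, (-Real.log (1-x))/x
    = ∫ x in Ioo (0:ℝ) (1/2:ℝ), (-Real.log x)/(1-x) := by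
  rw [← integral_Ioc_eq_integral_Ioo, ← intervalIntegral.integral_of_le (by norm_num : (1/2:ℝ) ≤ 1),
      ← integral_Ioc_eq_integral_Ioo,
      ← intervalIntegral.integral_of_le (by norm_num : (0:ℝ) ≤ 1/2)]
  have h := intervalIntegral.integral_comp_sub_left (a := (0:ℝ)) (b := (1/2:ℝ))
    (fun t => (-Real.log (1-t))/t) 1
  norm_num at h
  rw [← h]

lemma int1 : IntegrableOn (fun x : ℝ => (-Real.log (1-x))/x) (Ioc 0 (1/2:ℝ)) := by
  have hmeas : Measurable fun x : ℝ => (-Real.log (1-x))/x :=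
    ((Real.measurable_log.comp (measurable_const.sub measurable_id)).neg).div measurable_id
  refine Integrable.mono' (g := fun _ => (2:ℝ)) ?_ hmeas.aestronglyMeasurable ?_
  · exact integrableOn_const measure_Ioc_lt_top.ne
  · rw [ae_restrict_iff' measurableSet_Ioc]
    filter_upwards with x hx
    obtain ⟨hx0, hx2⟩ := hx
    have h1x : (0:ℝ) < 1 - x := by linarith
    have hlog : Real.log (1-x) ≤ 0 := Real.log_nonpos (by linarith) (by linarith)
    have hb := Real.log_le_sub_one_of_pos (inv_pos.mpr h1x)
    rw [Real.log_inv] at hb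
    have h' : 1 ≤ (1 + 2*x) * (1 - x) := by nlinarith
    have hinv : (1-x)⁻¹ ≤ 1 + 2*x := by
      calc (1-x)⁻¹ ≤ (1-x)⁻¹ * ((1+2*x)*(1-x)) :=
            le_mul_of_one_le_right (by positivity) h'
        _ = 1 + 2*x := by field_simp
    rw [Real.norm_of_nonneg (div_nonneg (by linarith) hx0.le), div_le_iff₀ hx0]
    linarith

lemma int_neg_log_one_sub : IntegrableOn (fun x : ℝ => -Real.log (1-x)) (Ioc (1/2:ℝ) 1) := by
  apply intervalIntegral.integrableOn_deriv_of_nonneg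
    (g := fun x : ℝ => (1-x) * Real.log (1-x) + x)
  · exact ((Real.continuous_mul_log.comp (continuous_const.sub continuous_id)).add
      continuous_id).continuousOn
  · intro x hx
    have h1x : (0:ℝ) < 1 - x := by
      simp only [mem_Ioo] at hx
      linarith [hx.2]
    have hm : HasDerivAt (fun y : ℝ => y * Real.log y) (Real.log (1-x) + 1) (1-x) := by
      have := (hasDerivAt_id (1-x)).mul (Real.hasDerivAt_log h1x.ne')
      refine this.congr_deriv ?_
      simp only [id, one_mul, mul_inv_cancel₀ h1x.ne']
    have hc : HasDerivAt (fun x : ℝ => 1 - x) (-1) x := (hasDerivAt_id x).const_sub 1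
    have hcomp := hm.comp x hc
    have htot := hcomp.add (hasDerivAt_id x)
    refine htot.congr_deriv ?_
    ring
  · intro x hx
    simp only [mem_Ioo] at hx
    have : Real.log (1-x) ≤ 0 := Real.log_nonpos (by linarith [hx.2]) (by linarith [hx.1])
    linarith

lemma int2 : IntegrableOn (fun x : ℝ => (-Real.log (1-x))/x) (Ioc (1/2:ℝ) 1) := by
  have hmeas : Measurable fun x : ℝ => (-Real.log (1-x))/x :=
    ((Real.measurable_log.comp (measurable_const.sub measurable_id)).neg).div measurable_id
  refine Integrable.mono' (g := fun x => 2 * (-Real.log (1-x))) ?_ hmeas.aestronglyMeasurable ?_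
  · exact int_neg_log_one_sub.const_mul 2
  · rw [ae_restrict_iff' measurableSet_Ioc]
    filter_upwards with x hx
    obtain ⟨hx0, hx1⟩ := hx
    have hl : 0 ≤ -Real.log (1-x) := by
      have := Real.log_nonpos (by linarith) (by linarith : 1 - x ≤ 1)
      linarith
    rw [Real.norm_of_nonneg (div_nonneg hl (by linarith)), div_le_iff₀ (by linarith : (0:ℝ) < x)]
    nlinarith

lemma split : ∫ x in Ioo (0:ℝ) 1, (-Real.log (1-x))/x
    = (∫ x in Ioo (0:ℝ) (1/2:ℝ), (-Real.log (1-x))/x)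
      + ∫ x in Ioo (1/2:ℝ) 1, (-Real.log (1-x))/x := by
  rw [← integral_Ioc_eq_integral_Ioo, ← integral_Ioc_eq_integral_Ioo,
    ← integral_Ioc_eq_integral_Ioo,
    ← intervalIntegral.integral_of_le (by norm_num : (0:ℝ) ≤ 1),
    ← intervalIntegral.integral_of_le (by norm_num : (0:ℝ) ≤ 1/2),
    ← intervalIntegral.integral_of_le (by norm_num : (1/2:ℝ) ≤ 1)]
  exact (intervalIntegral.integral_add_adjacent_intervals
    ((intervalIntegrable_iff_integrableOn_Ioc_of_le (by norm_num)).mpr int1)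
    ((intervalIntegrable_iff_integrableOn_Ioc_of_le (by norm_num)).mpr int2)).symm

theorem stmt_9 :
    ∫ x in (0:ℝ)..1, Real.log x / (x - 2) = π ^ 2 / 12 - (Real.log 2) ^ 2 / 2 := by
  have hL : ∫ x in (0:ℝ)..1, Real.log x / (x - 2)
      = ∑' n : ℕ, (1/2:ℝ)^(n+1) / ((n:ℝ)+1)^2 := by
    rw [intervalIntegral.integral_of_le (by norm_num : (0:ℝ) ≤ 1),
      integral_Ioc_eq_integral_Ioo]
    exact step1
  have h4 : ∫ x in Ioo (0:ℝ) 1, (-Real.log (1-x))/x = π^2/6 := by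
    rw [step2 one_pos le_rfl, ← basel_shift]
    exact tsum_congr fun n => by rw [one_pow]
  have hT := step2 (by norm_num : (0:ℝ) < 1/2) (by norm_num : (1/2:ℝ) ≤ 1)
  have hkey : π^2/6 = (∑' n : ℕ, (1/2:ℝ)^(n+1) / ((n:ℝ)+1)^2)
      + ((∑' n : ℕ, (1/2:ℝ)^(n+1) / ((n:ℝ)+1)^2) + Real.log 2 * Real.log 2) := by
    rw [← h4, split, sub_step, hT, step3]
  rw [hL]
  have hsq : Real.log 2 * Real.log 2 = (Real.log 2)^2 := by ring
  rw [hsq] at hkey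
  linarith
end

section
/- The sum over k >= 0 of (H_{3k+1} - H_k) * (-1)^k / ((3k+1) * binomial(3k,k) * 4^{k+1}) equals the negative of the integral from 0 to 1 of ln(x) / ((x+1)(x² - 3x + 4)) dx. -/
open MeasureTheory Real Finset intervalIntegral

lemma cont_aux (n : ℕ) : Continuous (fun x : ℝ => x ^ (n+1) * Real.log x) := by
  have : (fun x : ℝ => x ^ (n+1) * Real.log x) = fun x => x ^ n * (x * Real.log x) := by
    funext x; rw [pow_succ]; ring
  rw [this]
  exact (continuous_pow n).mul Real.continuous_mul_log

lemma hasDeriv_aux (n : ℕ) {x : ℝ} (hx : 0 < x) :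
    HasDerivAt (fun y : ℝ => (y ^ (n+1) - (n+1) * (y ^ (n+1) * Real.log y)) / ((n+1)^2))
      (x ^ n * (-Real.log x)) x := by
  have h1 : HasDerivAt (fun y : ℝ => y ^ (n+1)) ((n+1) * x ^ n) x := by
    simpa using hasDerivAt_pow (n+1) x
  have h2 : HasDerivAt Real.log x⁻¹ x := Real.hasDerivAt_log hx.ne'
  have h3 : HasDerivAt (fun y : ℝ => y ^ (n+1) * Real.log y)
      ((n+1) * x ^ n * Real.log x + x ^ (n+1) * x⁻¹) x := h1.mul h2
  have := ((h1.sub (h3.const_mul ((n:ℝ)+1))).div_const (((n:ℝ)+1)^2))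
  convert this using 1
  · rfl
  · rfl
  · rfl
  have hx' : x ≠ 0 := hx.ne'
  field_simp
  ring

lemma cont_antideriv (n : ℕ) :
    Continuous (fun y : ℝ => (y ^ (n+1) - (n+1) * (y ^ (n+1) * Real.log y)) / ((n+1)^2)) :=
  ((continuous_pow (n+1)).sub (continuous_const.mul (cont_aux n))).div_const _

lemma integ_pow_neg_log (n : ℕ) :
    IntervalIntegrable (fun x : ℝ => x ^ n * (-Real.log x)) volume 0 1 := by
  rw [intervalIntegrable_iff, Set.uIoc_of_le (zero_le_one)]
  apply intervalIntegral.integrableOn_deriv_of_nonneg ((cont_antideriv n).continuousOn)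
    (fun x hx => hasDeriv_aux n hx.1)
  intro x hx
  have := Real.log_nonpos hx.1.le hx.2.le
  have := pow_nonneg hx.1.le n
  nlinarith

lemma val_pow_neg_log (n : ℕ) :
    ∫ x in (0:ℝ)..1, x ^ n * (-Real.log x) = 1 / ((n:ℝ)+1) ^ 2 := by
  rw [intervalIntegral.integral_eq_sub_of_hasDeriv_right_of_le zero_le_one
    ((cont_antideriv n).continuousOn)
    (fun x hx => (hasDeriv_aux n hx.1).hasDerivWithinAt) (integ_pow_neg_log n)]
  simp [Real.log_one, Real.log_zero]

lemma integ_gen (m : ℕ) : ∀ n : ℕ,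
    IntervalIntegrable (fun x : ℝ => x ^ n * (1-x) ^ m * (-Real.log x)) volume 0 1 := by
  induction m with
  | zero => intro n; simpa using integ_pow_neg_log n
  | succ m ih =>
    intro n
    have key : (fun x : ℝ => x ^ n * (1-x) ^ (m+1) * (-Real.log x))
        = fun x => x ^ n * (1-x) ^ m * (-Real.log x) - x ^ (n+1) * (1-x) ^ m * (-Real.log x) := by
      funext x; ring
    rw [key]
    exact (ih n).sub (ih (n+1))

lemma J_val (m : ℕ) : ∀ n : ℕ,
    ∫ x in (0:ℝ)..1, x ^ n * (1-x) ^ m * (-Real.log x)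
      = ((m.factorial : ℝ) / ∏ j ∈ range (m+1), ((n:ℝ)+j+1)) *
          ∑ j ∈ range (m+1), 1/((n:ℝ)+j+1) := by
  induction m with
  | zero =>
    intro n
    have h : (fun x : ℝ => x ^ n * (1-x) ^ 0 * (-Real.log x))
        = fun x => x ^ n * (-Real.log x) := by funext x; ring
    rw [h, val_pow_neg_log]
    simp only [Finset.prod_range_one, Finset.sum_range_one, Nat.factorial_zero,
      Nat.cast_zero, Nat.cast_one, add_zero, zero_add]
    field_simp
  | succ m ih =>
    intro n
    have key : (fun x : ℝ => x ^ n * (1-x) ^ (m+1) * (-Real.log x))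
        = fun x => x ^ n * (1-x) ^ m * (-Real.log x) - x ^ (n+1) * (1-x) ^ m * (-Real.log x) := by
      funext x; ring
    rw [key, intervalIntegral.integral_sub (integ_gen m n) (integ_gen m (n+1)), ih n, ih (n+1)]
    -- now pure algebra
    have hcast : ((n+1 : ℕ) : ℝ) = (n : ℝ) + 1 := by push_cast; ring
    set a : ℝ := (n : ℝ) with ha
    have hP2 : ∏ j ∈ range (m+1+1), (a+j+1)
        = (∏ j ∈ range (m+1), (((n+1:ℕ):ℝ)+j+1)) * (a+1) := by
      rw [Finset.prod_range_succ']
      congr 1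
      · apply Finset.prod_congr rfl
        intro j _
        push_cast
        ring
      · push_cast; ring
    have hP1 : ∏ j ∈ range (m+1+1), (a+j+1)
        = (∏ j ∈ range (m+1), (a+j+1)) * (a+m+2) := by
      rw [Finset.prod_range_succ]
      push_cast
      ring
    have hS1 : ∑ j ∈ range (m+1+1), 1/(a+j+1)
        = (∑ j ∈ range (m+1), 1/(a+j+1)) + 1/(a+m+2) := by
      rw [Finset.sum_range_succ]
      push_cast
      ring
    have hS2 : ∑ j ∈ range (m+1+1), 1/(a+j+1)
        = (∑ j ∈ range (m+1), 1/(((n+1:ℕ):ℝ)+j+1)) + 1/(a+1) := by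
      rw [Finset.sum_range_succ']
      congr 1
      · apply Finset.sum_congr rfl
        intro j _
        push_cast
        ring_nf
        rw [ha]; ring
      · push_cast; ring
    set P : ℝ := ∏ j ∈ range (m+1), (a+j+1) with hP
    set P' : ℝ := ∏ j ∈ range (m+1), (((n+1:ℕ):ℝ)+j+1) with hP'
    set A : ℝ := ∑ j ∈ range (m+1+1), 1/(a+j+1) with hA
    have hPpos : 0 < P := by
      apply Finset.prod_pos
      intro j _
      have : (0:ℝ) ≤ a := by rw [ha]; positivity
      have : (0:ℝ) ≤ (j:ℝ) := by positivity
      linarith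
    have hP'pos : 0 < P' := by
      apply Finset.prod_pos
      intro j _
      have : (0:ℝ) ≤ ((n+1:ℕ):ℝ) := by positivity
      have : (0:ℝ) ≤ (j:ℝ) := by positivity
      linarith
    have ha1 : (0:ℝ) < a + 1 := by
      have : (0:ℝ) ≤ a := by rw [ha]; positivity
      linarith
    have ham : (0:ℝ) < a + m + 2 := by
      have : (0:ℝ) ≤ a := by rw [ha]; positivity
      have : (0:ℝ) ≤ (m:ℝ) := by positivity
      linarith
    have hrel : P' * (a+1) = P * (a+m+2) := by
      rw [← hP2, hP1]
    have hSm : (∑ j ∈ range (m+1), 1/(a+j+1)) = A - 1/(a+m+2) := by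
      rw [hS1]; ring
    have hSm' : (∑ j ∈ range (m+1), 1/(((n+1:ℕ):ℝ)+j+1)) = A - 1/(a+1) := by
      rw [hS2]; ring
    rw [hSm, hSm', hP1, Nat.factorial_succ]
    have hP'eq : P' = P * (a+m+2) / (a+1) := by
      field_simp
      linarith [hrel]
    rw [hP'eq]
    push_cast
    field_simp
    ring

lemma fact_prod (a : ℕ) : ∀ m : ℕ, a.factorial * ∏ j ∈ range m, (a+j+1) = (a+m).factorial := by
  intro m
  induction m with
  | zero => simp
  | succ m ih =>
    rw [Finset.prod_range_succ, ← mul_assoc, ih]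
    rw [show a + (m+1) = (a+m) + 1 by ring, Nat.factorial_succ]
    ring

lemma harmonic_diff (k : ℕ) :
    (harmonic (3*k+1) : ℝ) - (harmonic k : ℝ) = ∑ j ∈ range (2*k+1), 1/((k:ℝ)+j+1) := by
  have h1 : ∀ n : ℕ, (harmonic n : ℝ) = ∑ i ∈ range n, 1/((i:ℝ)+1) := by
    intro n
    rw [harmonic]
    push_cast
    apply Finset.sum_congr rfl
    intro i _
    rw [one_div]
  rw [h1, h1]
  rw [show 3*k+1 = k + (2*k+1) by ring]
  rw [Finset.sum_range_add]
  simp only [add_sub_cancel_left]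
  apply Finset.sum_congr rfl
  intro j _
  push_cast
  ring

lemma per_k (k : ℕ) :
    ∫ x in (0:ℝ)..1, x^k * (1-x)^(2*k) * (-Real.log x)
      = ((harmonic (3*k+1) : ℝ) - (harmonic k : ℝ)) /
          ((3*(k:ℝ)+1) * ((3*k).choose k : ℝ)) := by
  rw [J_val (2*k) k, harmonic_diff]
  have hnat : (2*k).factorial * ((3*k+1) * (3*k).choose k) = ∏ j ∈ range (2*k+1), (k+j+1) := by
    apply Nat.eq_of_mul_eq_mul_right (Nat.factorial_pos k)
    have hN : k.factorial * ∏ j ∈ range (2*k+1), (k+j+1) = (3*k+1).factorial := by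
      rw [fact_prod]; congr 1; ring
    have hC : (3*k).choose k * k.factorial * (2*k).factorial = (3*k).factorial := by
      have := Nat.choose_mul_factorial_mul_factorial (show k ≤ 3*k by omega)
      rwa [show 3*k-k = 2*k by omega] at this
    calc (2*k).factorial * ((3*k+1) * (3*k).choose k) * k.factorial
        = (3*k+1) * ((3*k).choose k * k.factorial * (2*k).factorial) := by ring
      _ = (3*k+1) * (3*k).factorial := by rw [hC]
      _ = (3*k+1).factorial := (Nat.factorial_succ (3*k)).symm
      _ = (∏ j ∈ range (2*k+1), (k+j+1)) * k.factorial := by rw [← hN]; ring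
  have hPcast : ∏ j ∈ range (2*k+1), ((k:ℝ)+j+1)
      = ((∏ j ∈ range (2*k+1), (k+j+1) : ℕ) : ℝ) := by push_cast; rfl
  have hPpos : (0:ℝ) < ∏ j ∈ range (2*k+1), ((k:ℝ)+j+1) := by
    apply Finset.prod_pos; intro j _; positivity
  have hCpos : (0:ℝ) < (3*(k:ℝ)+1) * ((3*k).choose k : ℝ) := by
    have h1 : (0:ℝ) < ((3*k).choose k : ℝ) := by
      exact_mod_cast Nat.choose_pos (show k ≤ 3*k by omega)
    have h2 : (0:ℝ) < 3*(k:ℝ)+1 := by positivity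
    exact mul_pos h2 h1
  have hkey : ((2*k).factorial : ℝ) / (∏ j ∈ range (2*k+1), ((k:ℝ)+j+1))
      = 1 / ((3*(k:ℝ)+1) * ((3*k).choose k : ℝ)) := by
    rw [div_eq_div_iff hPpos.ne' hCpos.ne', hPcast, one_mul]
    exact_mod_cast hnat
  rw [hkey]
  ring

noncomputable def F (k : ℕ) (x : ℝ) : ℝ :=
  (-1:ℝ)^k/4^(k+1) * (x^k * (1-x)^(2*k) * (-Real.log x))

lemma F_intOn (k : ℕ) : IntegrableOn (F k) (Set.Ioc (0:ℝ) 1) volume := by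
  have h := ((integ_gen (2*k) k).const_mul ((-1:ℝ)^k/4^(k+1)))
  rw [intervalIntegrable_iff, Set.uIoc_of_le zero_le_one] at h
  exact h

lemma neg_log_intOn : IntegrableOn (fun x : ℝ => -Real.log x) (Set.Ioc (0:ℝ) 1) volume := by
  have h := integ_pow_neg_log 0
  rw [intervalIntegrable_iff, Set.uIoc_of_le zero_le_one] at h
  simpa using h

lemma F_bound (k : ℕ) {x : ℝ} (hx : x ∈ Set.Ioc (0:ℝ) 1) :
    ‖F k x‖ ≤ (1/4:ℝ)^k * (-Real.log x) := by
  obtain ⟨h0, h1⟩ := hx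
  have hl : Real.log x ≤ 0 := Real.log_nonpos h0.le h1
  have hx1 : x^k ≤ 1 := pow_le_one₀ h0.le h1
  have hx2 : (1-x)^(2*k) ≤ 1 := pow_le_one₀ (by linarith) (by linarith)
  have h4 : (1/(4:ℝ)^(k+1)) ≤ (1/4:ℝ)^k := by
    rw [one_div_pow]
    apply one_div_le_one_div_of_le (by positivity)
    exact pow_le_pow_right₀ (by norm_num) (Nat.le_succ k)
  have hnl : 0 ≤ -Real.log x := by linarith
  have huvw : 0 ≤ x^k * (1-x)^(2*k) * (-Real.log x) :=
    mul_nonneg (mul_nonneg (by positivity) (pow_nonneg (by linarith) _)) hnl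
  have hFeq : ‖F k x‖ = (1/4^(k+1)) * (x^k * (1-x)^(2*k) * (-Real.log x)) := by
    rw [F, Real.norm_eq_abs, abs_mul, abs_div, abs_pow, abs_neg, abs_one, one_pow, abs_pow,
      abs_of_nonneg (by norm_num : (0:ℝ) ≤ 4), abs_of_nonneg huvw]
  rw [hFeq]
  have huv : x^k * (1-x)^(2*k) ≤ 1 := by
    calc x^k * (1-x)^(2*k) ≤ 1 * 1 :=
          mul_le_mul hx1 hx2 (pow_nonneg (by linarith) _) (by norm_num)
      _ = 1 := by norm_num
  have hmain : x^k * (1-x)^(2*k) * (-Real.log x) ≤ -Real.log x := by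
    calc x^k * (1-x)^(2*k) * (-Real.log x) ≤ 1 * (-Real.log x) :=
          mul_le_mul_of_nonneg_right huv hnl
      _ = -Real.log x := one_mul _
  exact mul_le_mul h4 hmain huvw (by positivity)

lemma tsum_pt {x : ℝ} (hx : x ∈ Set.Ioc (0:ℝ) 1) :
    ∑' k : ℕ, F k x = (-Real.log x)/((x+1)*(x^2-3*x+4)) := by
  obtain ⟨h0, h1⟩ := hx
  have hterm : ∀ k : ℕ, F k x = ((-Real.log x)/4) * (-(x*(1-x)^2)/4)^k := by
    intro k
    rw [F, div_pow, neg_pow (x*(1-x)^2), mul_pow, ← pow_mul]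
    ring
  have hnorm : ‖-(x*(1-x)^2)/4‖ < 1 := by
    have hnn : (0:ℝ) ≤ x*(1-x)^2 := mul_nonneg h0.le (sq_nonneg _)
    rw [Real.norm_eq_abs, abs_div, abs_neg, abs_of_nonneg hnn,
      abs_of_nonneg (by norm_num : (0:ℝ) ≤ 4)]
    have h2 : (1-x)^2 ≤ 1 := by nlinarith
    nlinarith
  rw [tsum_congr hterm, tsum_mul_left, tsum_geometric_of_norm_lt_one hnorm]
  have hd : (0:ℝ) < x^2-3*x+4 := by nlinarith [sq_nonneg (x - 3/2)]
  have hx1 : (0:ℝ) < x + 1 := by linarith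
  have heq : 1 - (-(x*(1-x)^2)/4) = ((x+1)*(x^2-3*x+4))/4 := by ring
  rw [heq]
  field_simp

lemma F_norm_sum : Summable fun k => ∫ x in Set.Ioc (0:ℝ) 1, ‖F k x‖ := by
  set C : ℝ := ∫ x in Set.Ioc (0:ℝ) 1, -Real.log x with hC
  have hbound : ∀ k : ℕ, ∫ x in Set.Ioc (0:ℝ) 1, ‖F k x‖ ≤ (1/4:ℝ)^k * C := by
    intro k
    have h1 : ∫ x in Set.Ioc (0:ℝ) 1, ‖F k x‖
        ≤ ∫ x in Set.Ioc (0:ℝ) 1, (1/4:ℝ)^k * (-Real.log x) := by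
      apply setIntegral_mono_on ((F_intOn k).norm) (neg_log_intOn.const_mul _)
        measurableSet_Ioc
      intro x hx
      exact F_bound k hx
    rwa [MeasureTheory.integral_const_mul] at h1
  apply Summable.of_nonneg_of_le
    (fun k => integral_nonneg fun x => norm_nonneg _) hbound
  exact (summable_geometric_of_lt_one (by norm_num) (by norm_num)).mul_right C

theorem stmt_11 :
    ∑' k : ℕ, ((harmonic (3 * k + 1) : ℝ) - (harmonic k : ℝ)) * (-1) ^ k /
        ((3 * k + 1) * (Nat.choose (3 * k) k : ℝ) * 4 ^ (k + 1)) =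
      -∫ x in (0:ℝ)..1, Real.log x / ((x + 1) * (x ^ 2 - 3 * x + 4)) := by
  have hterm : ∀ k : ℕ, ((harmonic (3 * k + 1) : ℝ) - (harmonic k : ℝ)) * (-1) ^ k /
        ((3 * k + 1) * (Nat.choose (3 * k) k : ℝ) * 4 ^ (k + 1))
      = ∫ x in Set.Ioc (0:ℝ) 1, F k x := by
    intro k
    rw [← intervalIntegral.integral_of_le zero_le_one]
    have : ∫ x in (0:ℝ)..1, F k x
        = (-1:ℝ)^k/4^(k+1) * ∫ x in (0:ℝ)..1, x^k * (1-x)^(2*k) * (-Real.log x) := by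
      simp only [F]
      rw [intervalIntegral.integral_const_mul]
    rw [this, per_k]
    have hC : ((3*k).choose k : ℝ) ≠ 0 := by
      exact_mod_cast (Nat.choose_pos (show k ≤ 3*k by omega)).ne'
    have h3 : 3*(k:ℝ)+1 ≠ 0 := by positivity
    have h4 : (4:ℝ)^(k+1) ≠ 0 := by positivity
    field_simp
  rw [tsum_congr hterm,
    MeasureTheory.integral_tsum_of_summable_integral_norm (fun k => F_intOn k) F_norm_sum,
    setIntegral_congr_fun measurableSet_Ioc (fun x hx => tsum_pt hx),
    ← intervalIntegral.integral_of_le zero_le_one, ← intervalIntegral.integral_neg]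
  congr 1
  funext x
  rw [neg_div]
end
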